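/- arXiv:2108.01762 — 12 statements merged into one kernel-verified Lean document; each statement's English description precedes it below -/
import Mathlib

section
/- Let ρ be a primitive, compactly bijective substitution of constant length L on a compact Hausdorff space 𝒜, and let 𝒢 be the closure in Homeo(𝒜) (compact-open topology) of the subgroup generated by the columns of ρ. Then 𝒢 acts transitively on 𝒜: for all a, b ∈ 𝒜 there exists g ∈ 𝒢 with g(a) = b. -/
/-- The group of self-homeomorphisms of a space, with `(f * g) x = f (g x)`. -/
instance homeoGroup {X : Type*} [TopologicalSpace X] : Group (X ≃ₜ X) where
  mul f g := g.trans f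
  one := Homeomorph.refl X
  inv := Homeomorph.symm
  mul_assoc f g h := Homeomorph.ext fun x => rfl
  one_mul f := Homeomorph.ext fun x => rfl
  mul_one f := Homeomorph.ext fun x => rfl
  inv_mul_cancel f := Homeomorph.ext fun x => f.symm_apply_apply x

/-- The compact-open topology on the group of self-homeomorphisms, induced
from the compact-open topology on `C(X, X)`. -/
noncomputable instance homeoCompactOpen {X : Type*} [TopologicalSpace X] :
    TopologicalSpace (X ≃ₜ X) :=
  TopologicalSpace.induced
    (fun g : X ≃ₜ X => (⟨g, g.continuous⟩ : C(X, X)))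
    ContinuousMap.compactOpen

/-- Let `ρ` be a primitive, compactly bijective substitution
of constant length `L` on a compact Hausdorff space `X`, with columns the
homeomorphisms `ρ_0, …, ρ_{L−1}`; primitivity says that for every nonempty
open `U` there is a `p ≥ 1` such that for every `a`, some composition of `p`
columns maps `a` into `U`.  Let `𝒢` be the closure, in the compact-open
topology on `Homeo(X)`, of the subgroup generated by the columns, and assume
`𝒢` is compact.  Then `𝒢` acts transitively on `X`. -/
theorem closure_column_group_transitive {X : Type*} [TopologicalSpace X]
    [CompactSpace X] [T2Space X]
    (L : ℕ) (hL : 1 ≤ L) (ρ : Fin L → (X ≃ₜ X))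
    (hprim : ∀ U : Set X, IsOpen U → U.Nonempty →
      ∃ p : ℕ, 1 ≤ p ∧ ∀ a : X, ∃ i : Fin p → Fin L,
        (List.ofFn i).foldr (fun j x => ρ j x) a ∈ U)
    (G : Set (X ≃ₜ X))
    (hG : G = closure ((Subgroup.closure (Set.range ρ) : Subgroup (X ≃ₜ X)) :
      Set (X ≃ₜ X)))
    (hGcpt : IsCompact G) :
    ∀ a b : X, ∃ g ∈ G, g a = b := by
  intro a b
  -- evaluation at `a` is continuous
  have hev : Continuous (fun g : X ≃ₜ X => g a) := by
    have h1 : Continuous (fun g : X ≃ₜ X => (⟨g, g.continuous⟩ : C(X, X))) :=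
      continuous_induced_dom
    have h2 : Continuous (fun f : C(X, X) => f a) :=
      continuous_eval_const a
    exact h2.comp h1
  -- the orbit of `a` under `G` is compact, hence closed
  set K : Set X := (fun g : X ≃ₜ X => g a) '' G with hK
  have hKcpt : IsCompact K := hGcpt.image hev
  have hKclosed : IsClosed K := hKcpt.isClosed
  -- fold equals product
  have hfold : ∀ l : List (Fin L), ∀ x : X,
      l.foldr (fun j y => ρ j y) x = (l.map ρ).prod x := by
    intro l
    induction l with
    | nil => intro x; rfl
    | cons j l ih =>
      intro x
      simp only [List.foldr_cons, List.map_cons, List.prod_cons]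
      rw [ih x]
      rfl
  -- membership: `b ∈ K`
  by_contra hcon
  push_neg at hcon
  have hbK : b ∉ K := by
    intro hb
    obtain ⟨g, hg, hga⟩ := hb
    exact hcon g hg hga
  have hUopen : IsOpen Kᶜ := hKclosed.isOpen_compl
  have hUne : Kᶜ.Nonempty := ⟨b, hbK⟩
  obtain ⟨p, -, hword⟩ := hprim Kᶜ hUopen hUne
  obtain ⟨i, hi⟩ := hword a
  -- the product of the word lies in the subgroup, hence in `G`
  set g₀ : X ≃ₜ X := ((List.ofFn i).map ρ).prod with hg₀
  have hmem : g₀ ∈ Subgroup.closure (Set.range ρ) := by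
    apply Subgroup.list_prod_mem
    intro x hx
    obtain ⟨j, -, rfl⟩ := List.mem_map.1 hx
    exact Subgroup.subset_closure ⟨j, rfl⟩
  have hg₀G : g₀ ∈ G := by
    rw [hG]
    exact subset_closure hmem
  have : g₀ a ∈ K := ⟨g₀, hg₀G, rfl⟩
  rw [hfold] at hi
  exact hi this
end

section
/- Let ρ be a primitive, compactly bijective substitution of constant length L on a compact Hausdorff space 𝒜, let 𝒢 be the closure in Homeo(𝒜) of the subgroup generated by the columns, and fix a basepoint p ∈ 𝒜. Then the stabiliser H = {g ∈ 𝒢 : g(p) = p} is a compact subgroup of 𝒢, and the map φ : 𝒢/H → 𝒜 defined by φ([g]) = g(p) is a well-defined homeomorphism which intertwines the left-multiplication action of 𝒢 on 𝒢/H with the evaluation action of 𝒢 on 𝒜, i.e. φ([hg]) = h(φ([g])) for all h, g ∈ 𝒢. -/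
/-- The setoid on `𝒢` identifying `g ∼ g'` iff `g(p) = g'(p)`; for the
stabiliser `H` of `p`, this is exactly the left-coset equivalence of `H`, so
its quotient realises the coset space `𝒢/H` (with the quotient topology). -/
def evSetoid {X : Type*} [TopologicalSpace X] (G : Set (X ≃ₜ X)) (p : X) :
    Setoid {g : X ≃ₜ X // g ∈ G} :=
  ⟨fun g g' => g.1 p = g'.1 p, ⟨fun _ => rfl, Eq.symm, Eq.trans⟩⟩

section Aux

variable {X : Type*} [TopologicalSpace X]

/-- The inclusion of homeomorphisms into continuous maps. -/
def homeoToCM (g : X ≃ₜ X) : C(X, X) := ⟨g, g.continuous⟩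

lemma continuous_homeoToCM : Continuous (homeoToCM (X := X)) :=
  continuous_induced_dom

lemma continuous_homeoEval (p : X) : Continuous fun g : X ≃ₜ X => g p := by
  have h : Continuous fun f : C(X, X) => f p := continuous_eval_const p
  exact h.comp continuous_homeoToCM

lemma continuous_homeoMulLeft (a : X ≃ₜ X) :
    Continuous fun x : X ≃ₜ X => a * x := by
  apply continuous_induced_rng.2
  have h : Continuous ((fun f : C(X, X) => (homeoToCM a).comp f) ∘ homeoToCM) :=
    (ContinuousMap.continuous_postcomp _).comp continuous_homeoToCM
  exact h

lemma continuous_homeoMulRight (b : X ≃ₜ X) :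
    Continuous fun x : X ≃ₜ X => x * b := by
  apply continuous_induced_rng.2
  have h : Continuous ((fun f : C(X, X) => f.comp (homeoToCM b)) ∘ homeoToCM) :=
    (ContinuousMap.continuous_precomp _).comp continuous_homeoToCM
  exact h

lemma continuous_homeoInv [CompactSpace X] [T2Space X] :
    Continuous fun g : X ≃ₜ X => g⁻¹ := by
  apply continuous_induced_rng.2
  rw [ContinuousMap.compactOpen_eq]
  refine continuous_generateFrom_iff.2 ?_
  rintro s ⟨K, hK, U, hU, rfl⟩
  have key : ((fun g : X ≃ₜ X => (⟨g, g.continuous⟩ : C(X, X))) ∘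
        fun g : X ≃ₜ X => g⁻¹) ⁻¹' {f : C(X, X) | Set.MapsTo f K U} =
      homeoToCM ⁻¹' {f : C(X, X) | Set.MapsTo f Uᶜ Kᶜ} := by
    ext g
    simp only [Set.mem_preimage, Function.comp_apply, Set.mem_setOf_eq]
    constructor
    · intro h x hx hgx
      have hxx : g.symm (g x) ∈ U := h hgx
      rw [g.symm_apply_apply] at hxx
      exact hx hxx
    · intro h x hx
      show g.symm x ∈ U
      by_contra hn
      have hxx : g (g.symm x) ∈ Kᶜ := h hn
      rw [g.apply_symm_apply] at hxx
      exact hxx hx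
  show IsOpen (((fun g : X ≃ₜ X => (⟨g, g.continuous⟩ : C(X, X))) ∘
    fun g : X ≃ₜ X => g⁻¹) ⁻¹' {f : C(X, X) | Set.MapsTo f K U})
  rw [key]
  exact (ContinuousMap.isOpen_setOf_mapsTo (hU.isClosed_compl.isCompact)
    hK.isClosed.isOpen_compl).preimage continuous_homeoToCM

lemma mul_mem_closure_subgroup [CompactSpace X] [T2Space X]
    (s : Subgroup (X ≃ₜ X)) {a b : X ≃ₜ X}
    (ha : a ∈ closure (s : Set (X ≃ₜ X))) (hb : b ∈ closure (s : Set (X ≃ₜ X))) :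
    a * b ∈ closure (s : Set (X ≃ₜ X)) := by
  have step : ∀ c ∈ (s : Set (X ≃ₜ X)), c * b ∈ closure (s : Set (X ≃ₜ X)) := by
    intro c hc
    exact map_mem_closure (continuous_homeoMulLeft c) hb fun d hd => mul_mem hc hd
  have : a * b ∈ closure (closure (s : Set (X ≃ₜ X))) :=
    map_mem_closure (f := fun x : X ≃ₜ X => x * b) (continuous_homeoMulRight b) ha step
  rwa [closure_closure] at this

lemma inv_mem_closure_subgroup [CompactSpace X] [T2Space X]
    (s : Subgroup (X ≃ₜ X)) {a : X ≃ₜ X}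
    (ha : a ∈ closure (s : Set (X ≃ₜ X))) :
    a⁻¹ ∈ closure (s : Set (X ≃ₜ X)) :=
  map_mem_closure continuous_homeoInv ha fun c hc => inv_mem hc

end Aux

/-- For a primitive, compactly bijective substitution `ρ` on
a compact Hausdorff space `X`, with `𝒢` the closure in `Homeo(X)` of the
subgroup generated by the columns and `p₀ ∈ X` a basepoint: the stabiliser
`H = {g ∈ 𝒢 : g p₀ = p₀}` is a compact subgroup, and
`φ : 𝒢/H → X, [g] ↦ g p₀` is a well-defined homeomorphism (where `[g] = [g']`
iff `g' ∈ gH`) intertwining left multiplication with evaluation: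
`φ([hg]) = h (φ [g])`. -/
theorem stabiliser_coset_homeomorphism {X : Type*} [TopologicalSpace X]
    [CompactSpace X] [T2Space X]
    (L : ℕ) (hL : 1 ≤ L) (ρ : Fin L → (X ≃ₜ X))
    (hprim : ∀ U : Set X, IsOpen U → U.Nonempty →
      ∃ p : ℕ, 1 ≤ p ∧ ∀ a : X, ∃ i : Fin p → Fin L,
        (List.ofFn i).foldr (fun j x => ρ j x) a ∈ U)
    (G : Set (X ≃ₜ X))
    (hG : G = closure ((Subgroup.closure (Set.range ρ) : Subgroup (X ≃ₜ X)) :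
      Set (X ≃ₜ X)))
    (hGcpt : IsCompact G)
    (p₀ : X) :
    ∃ H : Subgroup (X ≃ₜ X),
      (H : Set (X ≃ₜ X)) = {g : X ≃ₜ X | g ∈ G ∧ g p₀ = p₀} ∧
      IsCompact (H : Set (X ≃ₜ X)) ∧
      ∃ φ : Quotient (evSetoid G p₀) ≃ₜ X,
        (∀ g : {g : X ≃ₜ X // g ∈ G},
          φ (Quotient.mk (evSetoid G p₀) g) = g.1 p₀) ∧
        (∀ g g' : {g : X ≃ₜ X // g ∈ G},
          Quotient.mk (evSetoid G p₀) g = Quotient.mk (evSetoid G p₀) g' ↔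
            ∃ h ∈ H, g'.1 = g.1 * h) ∧
        (∀ h g k : {g : X ≃ₜ X // g ∈ G}, k.1 = h.1 * g.1 →
          φ (Quotient.mk (evSetoid G p₀) k) =
            h.1 (φ (Quotient.mk (evSetoid G p₀) g))) := by
  classical
  set C : Subgroup (X ≃ₜ X) := Subgroup.closure (Set.range ρ) with hC
  -- G is closed under the group operations
  have hmulG : ∀ {a b : X ≃ₜ X}, a ∈ G → b ∈ G → a * b ∈ G := by
    intro a b ha hb
    rw [hG] at ha hb ⊢
    exact mul_mem_closure_subgroup C ha hb
  have hinvG : ∀ {a : X ≃ₜ X}, a ∈ G → a⁻¹ ∈ G := by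
    intro a ha
    rw [hG] at ha ⊢
    exact inv_mem_closure_subgroup C ha
  have honeG : (1 : X ≃ₜ X) ∈ G := by
    rw [hG]; exact subset_closure C.one_mem
  -- The stabiliser subgroup
  refine ⟨{ carrier := {g : X ≃ₜ X | g ∈ G ∧ g p₀ = p₀}
            one_mem' := ⟨honeG, rfl⟩
            mul_mem' := by
              rintro a b ⟨haG, hap⟩ ⟨hbG, hbp⟩
              exact ⟨hmulG haG hbG, by
                show a (b p₀) = p₀
                rw [hbp, hap]⟩
            inv_mem' := by
              rintro a ⟨haG, hap⟩
              refine ⟨hinvG haG, ?_⟩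
              show a.symm p₀ = p₀
              conv_lhs => rw [← hap]
              exact a.symm_apply_apply p₀ }, rfl, ?_, ?_⟩
  · -- compactness of H
    have : {g : X ≃ₜ X | g ∈ G ∧ g p₀ = p₀} =
        G ∩ ((fun g : X ≃ₜ X => g p₀) ⁻¹' {p₀}) := rfl
    show IsCompact {g : X ≃ₜ X | g ∈ G ∧ g p₀ = p₀}
    rw [this]
    exact hGcpt.inter_right (isClosed_singleton.preimage (continuous_homeoEval p₀))
  · -- the homeomorphism
    haveI : CompactSpace {g : X ≃ₜ X // g ∈ G} := isCompact_iff_compactSpace.mp hGcpt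
    have cont_ev : Continuous fun g : {g : X ≃ₜ X // g ∈ G} => g.1 p₀ :=
      (continuous_homeoEval p₀).comp continuous_subtype_val
    let f0 : Quotient (evSetoid G p₀) → X :=
      Quotient.lift (fun g : {g : X ≃ₜ X // g ∈ G} => g.1 p₀) (fun _ _ h => h)
    have cont_f0 : Continuous f0 := cont_ev.quotient_lift _
    -- fold equals product
    have fold_eq : ∀ (l : List (Fin L)) (a : X),
        (l.map ρ).prod a = l.foldr (fun j x => ρ j x) a := by
      intro l
      induction l with
      | nil => intro a; rfl
      | cons j l ih =>
        intro a
        rw [List.map_cons, List.prod_cons, List.foldr_cons]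
        show ρ j ((l.map ρ).prod a) = ρ j (l.foldr (fun j x => ρ j x) a)
        rw [ih a]
    -- surjectivity
    have surj : ∀ x : X, ∃ g : {g : X ≃ₜ X // g ∈ G}, g.1 p₀ = x := by
      intro x
      by_contra hx
      push_neg at hx
      have hxU : x ∈ (Set.range fun g : {g : X ≃ₜ X // g ∈ G} => g.1 p₀)ᶜ := by
        rintro ⟨g, rfl⟩
        exact hx g rfl
      have hcl : IsClosed (Set.range fun g : {g : X ≃ₜ X // g ∈ G} => g.1 p₀) :=
        (isCompact_range cont_ev).isClosed
      obtain ⟨p, hp1, hall⟩ := hprim _ hcl.isOpen_compl ⟨x, hxU⟩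
      obtain ⟨i, hi⟩ := hall p₀
      set l : List (Fin L) := List.ofFn i with hl
      have hmem : (l.map ρ).prod ∈ G := by
        rw [hG]
        refine subset_closure ?_
        exact list_prod_mem fun y hy => by
          obtain ⟨j, _, rfl⟩ := List.mem_map.mp hy
          exact Subgroup.subset_closure (Set.mem_range_self j)
      exact hi ⟨⟨(l.map ρ).prod, hmem⟩, fold_eq l p₀⟩
    have surj' : Function.Surjective f0 := by
      intro x
      obtain ⟨g, hg⟩ := surj x
      exact ⟨Quotient.mk (evSetoid G p₀) g, hg⟩
    have inj : Function.Injective f0 := by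
      intro q q'
      refine Quotient.inductionOn₂ q q' ?_
      intro g g' h
      exact Quotient.sound h
    let e : Quotient (evSetoid G p₀) ≃ X := Equiv.ofBijective f0 ⟨inj, surj'⟩
    have cont_e : Continuous e := cont_f0
    refine ⟨Continuous.homeoOfEquivCompactToT2 cont_e, fun g => rfl, ?_, ?_⟩
    · -- coset characterisation
      intro g g'
      constructor
      · intro h
        have hrel : g.1 p₀ = g'.1 p₀ := Quotient.exact h
        refine ⟨g.1⁻¹ * g'.1, ⟨hmulG (hinvG g.2) g'.2, ?_⟩, (mul_inv_cancel_left g.1 g'.1).symm⟩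
        show g.1.symm (g'.1 p₀) = p₀
        rw [← hrel]
        exact g.1.symm_apply_apply p₀
      · rintro ⟨h, ⟨hhG, hhp⟩, heq⟩
        refine Quotient.sound ?_
        show g.1 p₀ = g'.1 p₀
        rw [heq]
        show g.1 p₀ = g.1 (h p₀)
        rw [hhp]
    · -- equivariance
      intro h g k hk
      show f0 (Quotient.mk (evSetoid G p₀) k) = h.1 (f0 (Quotient.mk (evSetoid G p₀) g))
      show k.1 p₀ = h.1 (g.1 p₀)
      rw [hk]
      rfl
end

section
/- Let ρ be a primitive, compactly bijective substitution of constant length L on a compact Hausdorff space 𝒜, and suppose the closure 𝒢 in Homeo(𝒜) of the subgroup generated by the columns is abelian. Then the action of 𝒢 on 𝒜 is free and transitive; in particular, for every p ∈ 𝒜 the evaluation map 𝒢 → 𝒜, g ↦ g(p), is a homeomorphism, and under this identification every column of ρ acts on 𝒜 ≅ 𝒢 as a group translation. -/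
lemma prod_map_apply {X : Type*} [TopologicalSpace X] {L : ℕ} (ρ : Fin L → (X ≃ₜ X)) :
    ∀ (l : List (Fin L)) (a : X),
      (l.map ρ).prod a = l.foldr (fun j x => ρ j x) a := by
  intro l
  induction l with
  | nil => intro a; rfl
  | cons j t ih =>
    intro a
    simp only [List.map_cons, List.prod_cons, List.foldr_cons]
    rw [← ih a]
    rfl

/-- Let `ρ` be a primitive, compactly bijective substitution
on a compact Hausdorff space `X` whose closure group `𝒢` (of the group
generated by the columns, in the compact-open topology) is abelian.  Then the
action of `𝒢` on `X` is free and transitive; in particular, for every `p` the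
evaluation map `𝒢 → X`, `g ↦ g p`, is a homeomorphism, and under this
identification every column acts as a group translation:
`ρ_j (g p) = (ρ_j · g) p`. -/
theorem abelian_closure_group_free_transitive {X : Type*} [TopologicalSpace X]
    [CompactSpace X] [T2Space X]
    (L : ℕ) (hL : 1 ≤ L) (ρ : Fin L → (X ≃ₜ X))
    (hprim : ∀ U : Set X, IsOpen U → U.Nonempty →
      ∃ p : ℕ, 1 ≤ p ∧ ∀ a : X, ∃ i : Fin p → Fin L,
        (List.ofFn i).foldr (fun j x => ρ j x) a ∈ U)
    (G : Set (X ≃ₜ X))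
    (hG : G = closure ((Subgroup.closure (Set.range ρ) : Subgroup (X ≃ₜ X)) :
      Set (X ≃ₜ X)))
    (hGcpt : IsCompact G)
    (habel : ∀ g h : X ≃ₜ X, g ∈ G → h ∈ G → g * h = h * g) :
    (∀ g : X ≃ₜ X, g ∈ G → ∀ a : X, g a = a → g = 1) ∧
    (∀ a b : X, ∃ g ∈ G, g a = b) ∧
    (∀ p : X, IsHomeomorph (fun g : {g : X ≃ₜ X // g ∈ G} => g.1 p)) ∧
    (∀ (j : Fin L) (p : X) (g : {g : X ≃ₜ X // g ∈ G}),
      ρ j (g.1 p) = (ρ j * g.1) p) := by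
  -- the subgroup generated by the columns is contained in G
  have hsub : ((Subgroup.closure (Set.range ρ) : Subgroup (X ≃ₜ X)) : Set (X ≃ₜ X)) ⊆ G := by
    rw [hG]; exact subset_closure
  -- evaluation at a point is continuous on homeomorphisms
  have hev : ∀ a : X, Continuous (fun g : X ≃ₜ X => g a) := by
    intro a
    have h1 : Continuous (fun g : X ≃ₜ X => (⟨g, g.continuous⟩ : C(X, X))) :=
      continuous_induced_dom
    have h2 : Continuous (fun f : C(X, X) => f a) :=
      ContinuousEvalConst.continuous_eval_const a
    exact h2.comp h1
  -- transitivity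
  have htrans : ∀ a b : X, ∃ g ∈ G, g a = b := by
    intro a b
    by_contra hcon
    push_neg at hcon
    have horb : IsCompact ((fun g : X ≃ₜ X => g a) '' G) := hGcpt.image (hev a)
    have hbU : b ∈ ((fun g : X ≃ₜ X => g a) '' G)ᶜ := by
      rintro ⟨g, hg, hga⟩
      exact hcon g hg hga
    obtain ⟨p, hp1, hw⟩ := hprim _ horb.isClosed.isOpen_compl ⟨b, hbU⟩
    obtain ⟨i, hi⟩ := hw a
    have hwmem : ((List.ofFn i).map ρ).prod ∈ Subgroup.closure (Set.range ρ) := by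
      refine list_prod_mem ?_
      intro x hx
      obtain ⟨j, _, rfl⟩ := List.mem_map.mp hx
      exact Subgroup.subset_closure ⟨j, rfl⟩
    have : ((List.ofFn i).map ρ).prod a ∈ (fun g : X ≃ₜ X => g a) '' G :=
      ⟨_, hsub hwmem, rfl⟩
    rw [prod_map_apply ρ (List.ofFn i) a] at this
    exact hi this
  -- freeness
  have hfree : ∀ g : X ≃ₜ X, g ∈ G → ∀ a : X, g a = a → g = 1 := by
    intro g hg a hga
    refine Homeomorph.ext fun x => ?_
    obtain ⟨h, hh, rfl⟩ := htrans a x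
    have : (g * h) a = (h * g) a := by rw [habel g h hg hh]
    have : g (h a) = h (g a) := this
    rw [this, hga]; rfl
  -- injectivity of evaluation
  have hinj : ∀ p : X, ∀ g h : X ≃ₜ X, g ∈ G → h ∈ G → g p = h p → g = h := by
    intro p g h hg hh hgh
    refine Homeomorph.ext fun x => ?_
    obtain ⟨k, hk, rfl⟩ := htrans p x
    have h1 : (g * k) p = (k * g) p := by rw [habel g k hg hk]
    have h2 : (h * k) p = (k * h) p := by rw [habel h k hh hk]
    have h1' : g (k p) = k (g p) := h1
    have h2' : h (k p) = k (h p) := h2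
    rw [h1', h2', hgh]
  refine ⟨hfree, htrans, ?_, fun j p g => rfl⟩
  intro p
  haveI : CompactSpace {g : X ≃ₜ X // g ∈ G} := isCompact_iff_compactSpace.mp hGcpt
  rw [isHomeomorph_iff_continuous_bijective]
  refine ⟨(hev p).comp continuous_subtype_val, ?_, ?_⟩
  · intro g h hgh
    exact Subtype.ext (hinj p g.1 h.1 g.2 h.2 hgh)
  · intro b
    obtain ⟨g, hg, hgb⟩ := htrans p b
    exact ⟨⟨g, hg⟩, hgb⟩
end

section
/- Let 𝒜 be a compact Hausdorff abelian topological group, L ≥ 2, β_0, …, β_{L−1} ∈ 𝒜, 0 ≤ s ≤ L−1, and let w : ℤ → 𝒜 satisfy the pseudo-fixed point relations w_{Lm+k−s} = w_m β_k for all m ∈ ℤ and 0 ≤ k ≤ L−1. Let χ be a unitary character of 𝒜 and fix m ∈ ℤ. If the autocorrelation coefficients η(m) and η(m+1) exist, then for each 0 ≤ k ≤ L−1 the coefficient η(Lm+k) exists and satisfies η(Lm+k) = (1/L) · Σ_{r=0}^{L−1} η(m + ⌊(r+k)/L⌋) · χ(β_r) · conj(χ(β_{(r+k) mod L})). In particular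 (the case k = 0), if η(m) exists then η(L^ℓ m) exists and η(L^ℓ m) = η(m) for every ℓ ≥ 1. -/
open Filter Finset

private lemma tendsto_den : Filter.Tendsto (fun N : ℕ => (2*(N:ℝ)+1)) atTop atTop := by
  apply Filter.tendsto_atTop_add_const_right
  exact (tendsto_natCast_atTop_atTop).const_mul_atTop (by norm_num)

private lemma avg_limit (L : ℕ) (hL : 2 ≤ L) (h : ℤ → ℂ)
    (hb : ∀ q : ℤ, ‖h q‖ ≤ 1) (η : ℂ)
    (hη : Filter.Tendsto (fun M : ℕ =>
      (∑ q ∈ Finset.Icc (-(M:ℤ)) (M:ℤ), h q) / (2*(M:ℂ)+1)) atTop (nhds η))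
    (Q : ℕ → Finset ℤ)
    (hQ : ∀ N : ℕ, L ≤ N →
      Finset.Icc (-((N/L - 1 : ℕ) : ℤ)) ((N/L - 1 : ℕ) : ℤ) ⊆ Q N ∧
      Q N ⊆ Finset.Icc (-((N/L + 1 : ℕ) : ℤ)) ((N/L + 1 : ℕ) : ℤ)) :
    Filter.Tendsto (fun N : ℕ => (∑ q ∈ Q N, h q) / (2*(N:ℂ)+1)) atTop (nhds (η / L)) := by
  have hL0 : 0 < L := by omega
  set M : ℕ → ℕ := fun N => N / L - 1 with hM
  have hMtop : Tendsto M atTop atTop := by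
    rw [tendsto_atTop_atTop]
    intro b
    refine ⟨L * (b+1), fun n hn => ?_⟩
    have h1 : b + 1 ≤ n / L := (Nat.le_div_iff_mul_le hL0).mpr (by rw [mul_comm]; exact hn)
    simp only [hM]; omega
  set sym : ℕ → Finset ℤ := fun N => Finset.Icc (-((M N : ℕ) : ℤ)) ((M N : ℕ) : ℤ) with hsym
  have T1 : Tendsto (fun N => (∑ q ∈ sym N, h q) / (2*((M N : ℕ):ℂ)+1)) atTop (nhds η) :=
    hη.comp hMtop
  -- the ratio tends to 1/L
  have T2R : Tendsto (fun N : ℕ => (2*((M N : ℕ):ℝ)+1) / (2*(N:ℝ)+1)) atTop (nhds (1/(L:ℝ))) := by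
    have hz : Tendsto (fun N : ℕ => ((3*(L:ℝ)+1)) / (2*(N:ℝ)+1)) atTop (nhds 0) :=
      tendsto_const_nhds.div_atTop tendsto_den
    rw [tendsto_iff_dist_tendsto_zero]
    refine squeeze_zero' (Eventually.of_forall fun _ => dist_nonneg) ?_ hz
    filter_upwards [eventually_ge_atTop L] with N hN
    have hd : 1 ≤ N / L := (Nat.le_div_iff_mul_le hL0).mpr (by omega)
    have hm : N % L < L := Nat.mod_lt _ hL0
    have hLr : (0:ℝ) < L := by exact_mod_cast hL0
    have hden : (0:ℝ) < 2*(N:ℝ)+1 := by positivity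
    have hMc : ((M N : ℕ):ℝ) = ((N/L : ℕ):ℝ) - 1 := by
      simp only [hM]; rw [Nat.cast_sub hd]; norm_num
    have hNc : (N:ℝ) = (L:ℝ) * ((N/L : ℕ):ℝ) + ((N % L : ℕ):ℝ) := by
      exact_mod_cast congrArg (Nat.cast : ℕ → ℝ) (Nat.div_add_mod N L).symm
    rw [Real.dist_eq]
    have key : (2*((M N : ℕ):ℝ)+1)/(2*(N:ℝ)+1) - 1/(L:ℝ)
        = (-(L:ℝ) - 2*((N % L : ℕ):ℝ) - 1) / ((2*(N:ℝ)+1) * (L:ℝ)) := by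
      rw [hMc, div_sub_div _ _ (ne_of_gt hden) (ne_of_gt hLr)]
      congr 1
      linear_combination (-2:ℝ) * hNc
    rw [key, abs_div]
    have hnum : |(-(L:ℝ) - 2*((N % L : ℕ):ℝ) - 1)| ≤ 3*(L:ℝ)+1 := by
      have he : ((N % L : ℕ):ℝ) ≤ (L:ℝ) - 1 := by
        have : ((N % L : ℕ):ℝ) + 1 ≤ (L:ℝ) := by exact_mod_cast hm
        linarith
      have he0 : (0:ℝ) ≤ ((N % L : ℕ):ℝ) := by positivity
      rw [abs_of_nonpos (by linarith)]
      linarith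
    have hdenabs : (2*(N:ℝ)+1) ≤ |(2*(N:ℝ)+1) * (L:ℝ)| := by
      rw [abs_of_pos (by positivity)]
      have hL1 : (1:ℝ) ≤ L := by exact_mod_cast (hL0 : (1:ℕ) ≤ L)
      nlinarith
    exact div_le_div₀ (by positivity) hnum hden hdenabs
  have T2 : Tendsto (fun N : ℕ => (2*((M N : ℕ):ℂ)+1)/(2*(N:ℂ)+1)) atTop (nhds (1/(L:ℂ))) := by
    have hcomp := (Complex.continuous_ofReal.tendsto _).comp T2R
    have h2 : ((1/(L:ℝ) : ℝ) : ℂ) = 1/(L:ℂ) := by push_cast; ring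
    rw [← h2]
    refine hcomp.congr fun N => ?_
    simp only [Function.comp]
    push_cast
    ring
  -- the boundary term tends to 0
  have cardIcc : ∀ a : ℕ, (Finset.Icc (-(a:ℤ)) (a:ℤ)).card = 2*a+1 := by
    intro a; rw [Int.card_Icc]; omega
  have T3 : Tendsto (fun N : ℕ => (∑ q ∈ Q N \ sym N, h q)/(2*(N:ℂ)+1)) atTop (nhds 0) := by
    rw [tendsto_zero_iff_norm_tendsto_zero]
    have hz : Tendsto (fun N : ℕ => (4:ℝ) / (2*(N:ℝ)+1)) atTop (nhds 0) :=
      tendsto_const_nhds.div_atTop tendsto_den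
    refine squeeze_zero' (Eventually.of_forall fun _ => norm_nonneg _) ?_ hz
    filter_upwards [eventually_ge_atTop L] with N hN
    obtain ⟨hQ1, hQ2⟩ := hQ N hN
    have hd : 1 ≤ N / L := (Nat.le_div_iff_mul_le hL0).mpr (by omega)
    have hcard : (Q N \ sym N).card ≤ 4 := by
      have h1 : (Q N).card ≤ 2*(N/L+1)+1 := by
        have := Finset.card_le_card hQ2
        rwa [cardIcc] at this
      have h2 : (sym N).card = 2*(M N)+1 := cardIcc _
      have h3 : (Q N \ sym N).card = (Q N).card - (sym N).card := Finset.card_sdiff_of_subset hQ1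
      have hMN : M N = N/L - 1 := rfl
      omega
    have hnorm : ‖∑ q ∈ Q N \ sym N, h q‖ ≤ 4 := by
      calc ‖∑ q ∈ Q N \ sym N, h q‖ ≤ ∑ q ∈ Q N \ sym N, ‖h q‖ := norm_sum_le _ _
        _ ≤ ∑ _q ∈ Q N \ sym N, 1 := by
            refine Finset.sum_le_sum fun q _ => ?_
            exact hb q
        _ = ((Q N \ sym N).card : ℝ) := by simp
        _ ≤ 4 := by exact_mod_cast hcard
    have hdc : (2*(N:ℂ)+1) = (((2*(N:ℝ)+1) : ℝ) : ℂ) := by push_cast; ring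
    rw [norm_div, hdc, Complex.norm_real, Real.norm_eq_abs, abs_of_pos (by positivity)]
    have : (0:ℝ) < 2*(N:ℝ)+1 := by positivity
    exact div_le_div₀ (by norm_num) hnorm this (le_refl _)
  -- combine
  have Tmain := (T1.mul T2).add T3
  rw [mul_one_div] at Tmain
  rw [show η / (L:ℂ) + 0 = η / (L:ℂ) by ring] at Tmain
  refine Tmain.congr' ?_
  filter_upwards [eventually_ge_atTop L] with N hN
  obtain ⟨hQ1, _⟩ := hQ N hN
  have hMne : (2*((M N : ℕ):ℂ)+1) ≠ 0 := by
    have h0 : ((2*(M N)+1 : ℕ):ℂ) ≠ 0 := Nat.cast_ne_zero.mpr (by omega)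
    have h1 : ((2*(M N)+1 : ℕ):ℂ) = 2*((M N : ℕ):ℂ)+1 := by push_cast; ring
    rwa [h1] at h0
  calc (∑ q ∈ sym N, h q) / (2*((M N : ℕ):ℂ)+1) * ((2*((M N : ℕ):ℂ)+1)/(2*(N:ℂ)+1))
        + (∑ q ∈ Q N \ sym N, h q)/(2*(N:ℂ)+1)
      = (∑ q ∈ sym N, h q) / (2*(N:ℂ)+1) + (∑ q ∈ Q N \ sym N, h q)/(2*(N:ℂ)+1) := by
        rw [div_mul_div_cancel₀ hMne]
    _ = ((∑ q ∈ Q N \ sym N, h q) + (∑ q ∈ sym N, h q)) / (2*(N:ℂ)+1) := by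
        rw [← add_div, add_comm]
    _ = (∑ q ∈ Q N, h q) / (2*(N:ℂ)+1) := by rw [Finset.sum_sdiff hQ1]



/-- `AutoCorr χ w m z` says that the autocorrelation coefficient
`η(m) = lim_{N→∞} (1/(2N+1)) Σ_{j=−N}^{N} χ(w_j)·conj(χ(w_{j+m}))`
exists and equals `z`. -/
def AutoCorr {A : Type*} (χ : A → ℂ) (w : ℤ → A) (m : ℤ) (z : ℂ) : Prop :=
  Filter.Tendsto (fun N : ℕ =>
      (∑ j ∈ Finset.Icc (-(N : ℤ)) (N : ℤ),
          χ (w j) * (starRingEnd ℂ) (χ (w (j + m)))) / (2 * (N : ℂ) + 1))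
    Filter.atTop (nhds z)


set_option maxHeartbeats 1000000 in
private lemma core {A : Type*} [CommGroup A]
    (L : ℕ) (hL : 2 ≤ L) (β : Fin L → A) (s : ℕ) (hs : s ≤ L - 1)
    (w : ℤ → A)
    (hw : ∀ (m : ℤ) (k : Fin L),
      w ((L : ℤ) * m + (k : ℤ) - (s : ℤ)) = w m * β k)
    (χ : A →* ℂ) (hχunit : ∀ a : A, ‖χ a‖ = 1)
    (m : ℤ) (k : ℕ) (hk : k < L) (η' : Fin L → ℂ)
    (hη' : ∀ r : Fin L, AutoCorr χ w (m + ((((r : ℕ) + k) / L : ℕ) : ℤ)) (η' r)) :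
    AutoCorr χ w ((L : ℤ) * m + (k : ℤ))
      ((∑ r : Fin L, η' r * (χ (β r) *
        (starRingEnd ℂ) (χ (β ⟨((r : ℕ) + k) % L, Nat.mod_lt _ (by omega)⟩)))) / (L : ℂ)) := by
  have hL0 : 0 < L := by omega
  have hLz : (0:ℤ) < (L:ℤ) := by exact_mod_cast hL0
  set ε : Fin L → ℕ := fun r => ((r:ℕ)+k)/L with hε
  set ρ : Fin L → Fin L := fun r => ⟨((r:ℕ)+k) % L, Nat.mod_lt _ hL0⟩ with hρ
  set c : Fin L → ℂ := fun r => χ (β r) * (starRingEnd ℂ) (χ (β (ρ r))) with hc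
  set h : Fin L → ℤ → ℂ :=
    fun r q => χ (w q) * (starRingEnd ℂ) (χ (w (q + (m + ((ε r : ℕ) : ℤ))))) with hh
  set Q : Fin L → ℕ → Finset ℤ :=
    fun r N => Finset.Icc (-(((N:ℤ) + (r:ℤ) - (s:ℤ))/(L:ℤ))) (((N:ℤ) + (s:ℤ) - (r:ℤ))/(L:ℤ))
    with hQdef
  -- membership criterion
  have hmem : ∀ (r : Fin L) (N : ℕ) (q : ℤ),
      q ∈ Q r N ↔ (-(N:ℤ) ≤ (L:ℤ)*q + (r:ℤ) - (s:ℤ) ∧ (L:ℤ)*q + (r:ℤ) - (s:ℤ) ≤ (N:ℤ)) := by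
    intro r N q
    rw [hQdef]
    simp only [Finset.mem_Icc]
    constructor
    · rintro ⟨h1, h2⟩
      rw [neg_le] at h1
      rw [Int.le_ediv_iff_mul_le hLz] at h1 h2
      constructor <;> nlinarith [h1, h2]
    · rintro ⟨h1, h2⟩
      constructor
      · rw [neg_le, Int.le_ediv_iff_mul_le hLz]; nlinarith
      · rw [Int.le_ediv_iff_mul_le hLz]; nlinarith
  -- pointwise identity
  have pointwise : ∀ (r : Fin L) (q : ℤ),
      χ (w ((L:ℤ)*q + (r:ℤ) - (s:ℤ))) *
        (starRingEnd ℂ) (χ (w (((L:ℤ)*q + (r:ℤ) - (s:ℤ)) + ((L:ℤ)*m + (k:ℤ)))))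
      = c r * h r q := by
    intro r q
    have e1 : w ((L:ℤ)*q + (r:ℤ) - (s:ℤ)) = w q * β r := hw q r
    have hdm : (L:ℕ) * (((r:ℕ)+k)/L) + ((r:ℕ)+k) % L = (r:ℕ)+k := Nat.div_add_mod _ _
    have hdmz : (L:ℤ) * ((ε r : ℕ) : ℤ) + (((ρ r : Fin L) : ℕ) : ℤ) = (r:ℤ) + (k:ℤ) := by
      simp only [hε, hρ]
      exact_mod_cast congrArg (Nat.cast : ℕ → ℤ) hdm
    have e2arg : ((L:ℤ)*q + (r:ℤ) - (s:ℤ)) + ((L:ℤ)*m + (k:ℤ))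
        = (L:ℤ)*(q + (m + ((ε r : ℕ):ℤ))) + (((ρ r : Fin L) : ℕ):ℤ) - (s:ℤ) := by
      nlinarith [hdmz]
    have e2 : w (((L:ℤ)*q + (r:ℤ) - (s:ℤ)) + ((L:ℤ)*m + (k:ℤ)))
        = w (q + (m + ((ε r : ℕ):ℤ))) * β (ρ r) := by
      rw [e2arg]; exact hw _ (ρ r)
    rw [e1, e2, map_mul, map_mul, map_mul]
    simp only [hc, hh]
    ring
  -- sum splitting
  have hsplit : ∀ N : ℕ,
      (∑ x ∈ Finset.univ.sigma (fun r : Fin L => Q r N),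
        χ (w ((L:ℤ)*x.2 + (x.1:ℤ) - (s:ℤ))) *
          (starRingEnd ℂ) (χ (w (((L:ℤ)*x.2 + (x.1:ℤ) - (s:ℤ)) + ((L:ℤ)*m + (k:ℤ))))))
      = ∑ j ∈ Finset.Icc (-(N:ℤ)) (N:ℤ),
          χ (w j) * (starRingEnd ℂ) (χ (w (j + ((L:ℤ)*m + (k:ℤ))))) := by
    intro N
    have hLne : (L:ℤ) ≠ 0 := ne_of_gt hLz
    refine Finset.sum_nbij' (i := fun x : Σ _ : Fin L, ℤ => (L:ℤ)*x.2 + (x.1:ℤ) - (s:ℤ))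
      (j := fun j : ℤ => ⟨⟨((j + (s:ℤ)) % (L:ℤ)).toNat, by
          have h1 := Int.emod_lt_of_pos (j + (s:ℤ)) hLz
          have h2 := Int.emod_nonneg (j + (s:ℤ)) hLne
          omega⟩, (j + (s:ℤ)) / (L:ℤ)⟩) ?_ ?_ ?_ ?_ ?_
    · rintro ⟨r, q⟩ hx
      rw [Finset.mem_sigma] at hx
      have h9 := (hmem r N q).mp hx.2
      rw [Finset.mem_Icc]
      dsimp only
      exact ⟨by linarith [h9.1], by linarith [h9.2]⟩
    · intro j hj
      rw [Finset.mem_Icc] at hj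
      rw [Finset.mem_sigma]
      refine ⟨Finset.mem_univ _, ?_⟩
      rw [hmem]
      have h5 := Int.mul_ediv_add_emod (j + (s:ℤ)) (L:ℤ)
      have h2 := Int.emod_nonneg (j + (s:ℤ)) hLne
      have h6 := Int.toNat_of_nonneg h2
      constructor <;> simp only [Fin.val_mk] <;> omega
    · rintro ⟨r, q⟩ hx
      have hr0 : (0:ℤ) ≤ (r:ℤ) := by positivity
      have hrL : (r:ℤ) < (L:ℤ) := by exact_mod_cast r.isLt
      have e3 : (L:ℤ)*q + (r:ℤ) - (s:ℤ) + (s:ℤ) = (r:ℤ) + (L:ℤ)*q := by ring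
      refine Sigma.ext ?_ ?_
      · apply Fin.ext
        simp only [e3, Fin.val_mk]
        rw [Int.add_mul_emod_self_left, Int.emod_eq_of_lt hr0 hrL]
        omega
      · apply heq_of_eq
        simp only [e3]
        rw [Int.add_mul_ediv_left _ _ hLne, Int.ediv_eq_zero_of_lt hr0 hrL]
        ring
    · intro j hj
      have h5 := Int.mul_ediv_add_emod (j + (s:ℤ)) (L:ℤ)
      have h2 := Int.emod_nonneg (j + (s:ℤ)) hLne
      have h6 := Int.toNat_of_nonneg h2
      simp only [Fin.val_mk]
      omega
    · rintro ⟨r, q⟩ _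
      rfl
  -- claim B
  have claimB : ∀ N : ℕ,
      (∑ j ∈ Finset.Icc (-(N:ℤ)) (N:ℤ),
          χ (w j) * (starRingEnd ℂ) (χ (w (j + ((L:ℤ)*m + (k:ℤ))))))
      = ∑ r : Fin L, c r * ∑ q ∈ Q r N, h r q := by
    intro N
    have hd2 := Finset.sum_sigma' (Finset.univ : Finset (Fin L)) (fun r => Q r N)
      (fun r q => χ (w ((L:ℤ)*q + (r:ℤ) - (s:ℤ))) *
        (starRingEnd ℂ) (χ (w (((L:ℤ)*q + (r:ℤ) - (s:ℤ)) + ((L:ℤ)*m + (k:ℤ))))))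
    rw [← hsplit N, ← hd2]
    refine Finset.sum_congr rfl fun r _ => ?_
    rw [Finset.mul_sum]
    exact Finset.sum_congr rfl fun q _ => pointwise r q
  -- per-residue limits
  have hlim : ∀ r : Fin L,
      Tendsto (fun N : ℕ => (∑ q ∈ Q r N, h r q)/(2*(N:ℂ)+1)) atTop (nhds (η' r / L)) := by
    intro r
    refine avg_limit L hL (h r) ?_ (η' r) (hη' r) (Q r) ?_
    · intro q
      simp only [hh]
      rw [norm_mul, Complex.norm_conj, hχunit, hχunit]
      norm_num
    · intro N hN
      have hd : 1 ≤ N / L := (Nat.le_div_iff_mul_le hL0).mpr (by omega)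
      have hNZ : (N:ℤ) = (L:ℤ) * ((N/L : ℕ):ℤ) + ((N % L : ℕ):ℤ) := by
        exact_mod_cast congrArg (Nat.cast : ℕ → ℤ) (Nat.div_add_mod N L).symm
      have hcast : ((N/L - 1 : ℕ) : ℤ) = ((N/L : ℕ):ℤ) - 1 := by
        rw [Nat.cast_sub hd]; norm_num
      have hcast2 : ((N/L + 1 : ℕ) : ℤ) = ((N/L : ℕ):ℤ) + 1 := by push_cast; ring
      have hrL : (r:ℤ) < (L:ℤ) := by exact_mod_cast r.isLt
      have hr0 : (0:ℤ) ≤ (r:ℤ) := by positivity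
      have hsL : (s:ℤ) ≤ (L:ℤ) - 1 := by
        have : s ≤ L - 1 := hs
        omega
      have he0 : (0:ℤ) ≤ ((N % L : ℕ):ℤ) := by positivity
      have heL : ((N % L : ℕ):ℤ) < (L:ℤ) := by exact_mod_cast Nat.mod_lt _ hL0
      have hs0 : (0:ℤ) ≤ (s:ℤ) := by positivity
      constructor
      · intro q hq
        rw [Finset.mem_Icc, hcast] at hq
        rw [hmem]
        have hub : (L:ℤ)*q ≤ (L:ℤ)*(((N/L : ℕ):ℤ) - 1) :=
          mul_le_mul_of_nonneg_left hq.2 (le_of_lt hLz)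
        have hlb : (L:ℤ)*(-(((N/L : ℕ):ℤ) - 1)) ≤ (L:ℤ)*q :=
          mul_le_mul_of_nonneg_left hq.1 (le_of_lt hLz)
        have e1 : (L:ℤ)*(((N/L : ℕ):ℤ) - 1) = (L:ℤ)*((N/L : ℕ):ℤ) - (L:ℤ) := by ring
        have e2 : (L:ℤ)*(-(((N/L : ℕ):ℤ) - 1)) = -((L:ℤ)*((N/L : ℕ):ℤ)) + (L:ℤ) := by ring
        clear hmem claimB pointwise hsplit hη'
        constructor
        · linarith
        · linarith
      · intro q hq
        rw [hmem] at hq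
        rw [Finset.mem_Icc, hcast2]
        have e1 : (L:ℤ)*(((N/L : ℕ):ℤ)+2) = (L:ℤ)*((N/L : ℕ):ℤ) + 2*(L:ℤ) := by ring
        have e2 : (L:ℤ)*(-(((N/L : ℕ):ℤ)+2)) = -((L:ℤ)*((N/L : ℕ):ℤ)) - 2*(L:ℤ) := by ring
        have h1 : (L:ℤ)*q < (L:ℤ)*(((N/L : ℕ):ℤ)+2) := by
          clear hmem claimB pointwise hsplit hη'
          linarith [hq.2]
        have h2 : (L:ℤ)*(-(((N/L : ℕ):ℤ)+2)) < (L:ℤ)*q := by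
          clear hmem claimB pointwise hsplit hη'
          linarith [hq.1]
        have h3 : q < ((N/L : ℕ):ℤ)+2 := lt_of_mul_lt_mul_left h1 (le_of_lt hLz)
        have h4 : -(((N/L : ℕ):ℤ)+2) < q := lt_of_mul_lt_mul_left h2 (le_of_lt hLz)
        constructor <;> omega
  -- assemble
  have hV : (∑ r : Fin L, η' r * (χ (β r) *
        (starRingEnd ℂ) (χ (β ⟨((r : ℕ) + k) % L, Nat.mod_lt _ (by omega)⟩)))) / (L : ℂ)
      = ∑ r : Fin L, c r * (η' r / (L:ℂ)) := by
    rw [Finset.sum_div]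
    refine Finset.sum_congr rfl fun r _ => ?_
    simp only [hc, hρ]
    ring
  rw [AutoCorr, hV]
  have hT := tendsto_finset_sum (Finset.univ : Finset (Fin L))
    (fun r _ => (hlim r).const_mul (c r))
  refine hT.congr fun N => ?_
  rw [claimB N, Finset.sum_div]
  exact (Finset.sum_congr rfl fun r _ => mul_div_assoc (c r) _ _).symm

/-- For a pseudo-fixed point `w` of a bijective abelian
substitution of constant length `L` with columns `θ ↦ θβ_k` and shift `s`,
weighted by a unitary character `χ`: if `η(m)` and `η(m+1)` exist, then for
each `0 ≤ k ≤ L−1`, `η(Lm+k)` exists and equals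
`(1/L)·Σ_{r=0}^{L−1} η(m+⌊(r+k)/L⌋)·χ(β_r)·conj(χ(β_{(r+k) mod L}))`;
in particular `η(L^ℓ m) = η(m)` for all `ℓ ≥ 1`. -/
theorem bijective_recurrence {A : Type*} [TopologicalSpace A] [CompactSpace A]
    [T2Space A] [CommGroup A] [IsTopologicalGroup A]
    (L : ℕ) (hL : 2 ≤ L) (β : Fin L → A) (s : ℕ) (hs : s ≤ L - 1)
    (w : ℤ → A)
    (hw : ∀ (m : ℤ) (k : Fin L),
      w ((L : ℤ) * m + (k : ℤ) - (s : ℤ)) = w m * β k)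
    (χ : A →* ℂ) (hχcont : Continuous χ)
    (hχunit : ∀ a : A, ‖χ a‖ = 1)
    (m : ℤ) (ηm ηm1 : ℂ)
    (hηm : AutoCorr χ w m ηm) (hηm1 : AutoCorr χ w (m + 1) ηm1) :
    (∀ k : ℕ, k ≤ L - 1 →
      AutoCorr χ w ((L : ℤ) * m + (k : ℤ))
        ((∑ r : Fin L,
            (if ((r : ℕ) + k) / L = 0 then ηm else ηm1) *
              χ (β r) *
              (starRingEnd ℂ)
                (χ (β ⟨((r : ℕ) + k) % L, Nat.mod_lt _ (by omega)⟩))) /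
          (L : ℂ))) ∧
    ∀ ℓ : ℕ, 1 ≤ ℓ → AutoCorr χ w ((L : ℤ) ^ ℓ * m) ηm := by
  have hL0 : 0 < L := by omega
  constructor
  · intro k hk
    have hk' : k < L := by omega
    have hcore := core L hL β s hs w hw χ hχunit m k hk'
      (fun r => if ((r : ℕ) + k) / L = 0 then ηm else ηm1) ?_
    · have heq : (∑ r : Fin L,
          (if ((r : ℕ) + k) / L = 0 then ηm else ηm1) * χ (β r) *
            (starRingEnd ℂ) (χ (β ⟨((r : ℕ) + k) % L, Nat.mod_lt _ (by omega)⟩)))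
          = ∑ r : Fin L,
          (if ((r : ℕ) + k) / L = 0 then ηm else ηm1) * (χ (β r) *
            (starRingEnd ℂ) (χ (β ⟨((r : ℕ) + k) % L, Nat.mod_lt _ (by omega)⟩))) :=
        Finset.sum_congr rfl fun r _ => mul_assoc _ _ _
      rw [heq]
      exact hcore
    · intro r
      by_cases hr : ((r : ℕ) + k) / L = 0
      · simpa [hr] using hηm
      · have h2 : ((r : ℕ) + k) / L < 2 :=
          (Nat.div_lt_iff_lt_mul hL0).mpr (by have := r.isLt; omega)
        have h3 : 0 < ((r : ℕ) + k) / L := Nat.pos_of_ne_zero hr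
        have h1 : ((r : ℕ) + k) / L = 1 := by omega
        simpa [h1] using hηm1
  · have mulstep : ∀ (m' : ℤ) (η : ℂ), AutoCorr χ w m' η → AutoCorr χ w ((L : ℤ) * m') η := by
      intro m' η hη
      have hcore := core L hL β s hs w hw χ hχunit m' 0 hL0 (fun _ => η) ?_
      · have hV : (∑ r : Fin L, (fun _ : Fin L => η) r * (χ (β r) *
            (starRingEnd ℂ) (χ (β ⟨((r : ℕ) + 0) % L, Nat.mod_lt _ (by omega)⟩)))) / (L : ℂ)
            = η := by
          have hterm : ∀ r : Fin L, (fun _ : Fin L => η) r * (χ (β r) *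
              (starRingEnd ℂ) (χ (β ⟨((r : ℕ) + 0) % L, Nat.mod_lt _ (by omega)⟩))) = η := by
            intro r
            have hidx : (⟨((r : ℕ) + 0) % L, Nat.mod_lt _ (by omega)⟩ : Fin L) = r := by
              apply Fin.ext
              simp [Nat.mod_eq_of_lt r.isLt]
            rw [hidx]
            have hns : (Complex.normSq (χ (β r)) : ℂ) = 1 := by
              rw [← Complex.sq_norm, hχunit]
              norm_num
            rw [Complex.mul_conj, hns]
            ring
          rw [Finset.sum_congr rfl fun r _ => hterm r, Finset.sum_const, Finset.card_univ,
            Fintype.card_fin, nsmul_eq_mul]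
          have hLC : (L:ℂ) ≠ 0 := by
            simp only [ne_eq, Nat.cast_eq_zero]
            omega
          rw [mul_comm, mul_div_assoc, div_self hLC, mul_one]
        rw [hV] at hcore
        have harg : (L : ℤ) * m' + ((0:ℕ) : ℤ) = (L : ℤ) * m' := by simp
        rwa [harg] at hcore
      · intro r
        have h0 : ((r : ℕ) + 0) / L = 0 := Nat.div_eq_of_lt (by have := r.isLt; omega)
        rw [h0]
        simpa using hη
    intro l hl
    obtain ⟨n, rfl⟩ : ∃ n, l = n + 1 := ⟨l - 1, by omega⟩
    clear hl
    induction n with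
    | zero => simpa using mulstep m ηm hηm
    | succ n ih =>
      have hstep := mulstep _ _ ih
      have harg : (L : ℤ) * ((L : ℤ) ^ (n + 1) * m) = (L : ℤ) ^ (n + 1 + 1) * m := by ring
      rwa [harg] at hstep
end

section
/- Let L ≥ 2 and let η : ℤ → ℂ satisfy: η(−m) = conj(η(m)) and |η(m)| ≤ |η(0)| for all m ∈ ℤ, and |η(Lm+k)| ≤ ((L−k)/L)·|η(m)| + (k/L)·|η(m+1)| for all m ∈ ℤ and 0 ≤ k ≤ L−1. If there is c > 0 with |η(0)| − |η(1)| > c, then |η(0)| − |η(k)| > c/L for every k ∈ ℤ with k ≠ 0. Consequently, for every ε with 0 < ε < √(c/L), the set of ε-almost periods P_ε = {m ∈ ℤ : |η(0) − η(m)|^{1/2} < ε} equals {0}, and in particular P_ε is not relatively dense in ℤ. -/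
/-- A set `S ⊆ ℤ` is relatively dense if there is `R > 0` such that every
interval of length `R` in `ℤ` contains a point of `S`. -/
def RelDense (S : Set ℤ) : Prop :=
  ∃ R : ℕ, 0 < R ∧ ∀ a : ℤ, ∃ m ∈ S, a ≤ m ∧ m < a + R

/-- If `η : ℤ → ℂ` satisfies `η(−m) = conj (η m)`,
`|η m| ≤ |η 0|`, the recursive inequalities
`|η(Lm+k)| ≤ ((L−k)/L)|η m| + (k/L)|η (m+1)|`, and `|η 0| − |η 1| > c > 0`,
then `|η 0| − |η k| > c/L` for all `k ≠ 0`; consequently, for every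
`0 < ε < √(c/L)`, the set of `ε`-almost periods
`P_ε = {m : |η 0 − η m|^{1/2} < ε}` equals `{0}` and is not relatively dense. -/
theorem bijective_absence_of_pure_point (L : ℕ) (hL : 2 ≤ L) (η : ℤ → ℂ)
    (hsymm : ∀ m : ℤ, η (-m) = (starRingEnd ℂ) (η m))
    (hbound : ∀ m : ℤ, ‖η m‖ ≤ ‖η 0‖)
    (hrec : ∀ (m : ℤ) (k : ℕ), k ≤ L - 1 →
      ‖η ((L : ℤ) * m + (k : ℤ))‖ ≤
        (((L : ℝ) - (k : ℝ)) / L) * ‖η m‖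
          + ((k : ℝ) / L) * ‖η (m + 1)‖)
    (c : ℝ) (hc : 0 < c)
    (hgap : ‖η 0‖ - ‖η 1‖ > c) :
    (∀ k : ℤ, k ≠ 0 → ‖η 0‖ - ‖η k‖ > c / L) ∧
    ∀ ε : ℝ, 0 < ε → ε < Real.sqrt (c / L) →
      {m : ℤ | Real.sqrt (‖η 0 - η m‖) < ε} = {0} ∧
      ¬ RelDense {m : ℤ | Real.sqrt (‖η 0 - η m‖) < ε} := by
  have hl0 : (0:ℝ) < (L:ℝ) := by positivity
  have hl2 : (2:ℝ) ≤ (L:ℝ) := by exact_mod_cast hL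
  set A := ‖η 0‖ with hA
  -- main induction on naturals
  have key : ∀ n : ℕ, n ≠ 0 → A - ‖η (n:ℤ)‖ > c / L := by
    intro n
    induction n using Nat.strong_induction_on with
    | _ n IH =>
      intro hn
      rcases eq_or_ne n 1 with rfl | hn1
      · have : c / L < c := by
          rw [div_lt_iff₀ hl0]; nlinarith
        push_cast
        linarith [hgap]
      · -- n ≥ 2
        have hn2 : 2 ≤ n := by omega
        set m := n / L with hm
        set r := n % L with hr
        have hrL : r < L := Nat.mod_lt _ (by omega)
        have hrL1 : r ≤ L - 1 := by omega
        have hdm : L * m + r = n := Nat.div_add_mod n L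
        have hmn : m < n := Nat.div_lt_self (by omega) (by omega)
        have heq : (n:ℤ) = (L:ℤ) * (m:ℤ) + (r:ℤ) := by push_cast [← hdm]; ring
        have hrec' := hrec (m:ℤ) r hrL1
        rw [← heq] at hrec'
        have hrec2 : (L:ℝ) * ‖η (n:ℤ)‖ ≤
            ((L:ℝ) - (r:ℝ)) * ‖η (m:ℤ)‖
              + (r:ℝ) * ‖η ((m:ℤ) + 1)‖ := by
          have h := mul_le_mul_of_nonneg_left hrec' hl0.le
          have hLne : (L:ℝ) ≠ 0 := ne_of_gt hl0
          field_simp at h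
          linarith [h]
        rcases eq_or_ne r 0 with hr0 | hr0
        · -- n = L * m, use IH on m
          have hm0 : m ≠ 0 := by
            intro h; rw [h, Nat.mul_zero] at hdm; omega
          have h1 := IH m hmn hm0
          have hx : ‖η (n:ℤ)‖ ≤ ‖η (m:ℤ)‖ := by
            rw [hr0] at hrec2
            push_cast at hrec2
            nlinarith [hrec2]
          linarith
        · have hr1 : (1:ℝ) ≤ (r:ℝ) := by exact_mod_cast Nat.one_le_iff_ne_zero.2 hr0
          have hrle : (r:ℝ) ≤ (L:ℝ) - 1 := by
            have : (r:ℝ) + 1 ≤ (L:ℝ) := by exact_mod_cast hrL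
            linarith
          rcases eq_or_ne m 0 with hm0 | hm0
          · -- n = r, 1 ≤ r < L : use gap
            have hb0 : ‖η (m:ℤ)‖ = A := by rw [hm0]; rfl
            have h1 : A - ‖η ((m:ℤ) + 1)‖ > c := by
              rw [hm0]; push_cast; simpa using hgap
            rw [hb0] at hrec2
            rw [gt_iff_lt, div_lt_iff₀ hl0]
            nlinarith [hrec2, mul_lt_mul_of_pos_left h1 (by linarith : (0:ℝ) < (r:ℝ)),
              mul_nonneg hc.le (by linarith : (0:ℝ) ≤ (r:ℝ) - 1)]
          · -- 1 ≤ m, 1 ≤ r : both IH apply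
            have h2m : 2 * m ≤ L * m := Nat.mul_le_mul_right m hL
            have hmn1 : m + 1 < n := by omega
            have h1 := IH m hmn hm0
            have h2 := IH (m+1) hmn1 (by omega)
            push_cast at h2
            rw [gt_iff_lt, div_lt_iff₀ hl0] at h1 h2 ⊢
            have e1 := mul_lt_mul_of_pos_left h1 (by linarith : (0:ℝ) < (L:ℝ) - (r:ℝ))
            have e2 := mul_lt_mul_of_pos_left h2 (by linarith : (0:ℝ) < (r:ℝ))
            have e3 := mul_le_mul_of_nonneg_left hrec2 hl0.le
            have e4 : (L:ℝ) * c < (L:ℝ) * ((A - ‖η (n:ℤ)‖) * L) := by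
              nlinarith [e1, e2, e3]
            exact lt_of_mul_lt_mul_left e4 hl0.le
  -- extend to all nonzero integers
  have main : ∀ k : ℤ, k ≠ 0 → A - ‖η k‖ > c / L := by
    intro k hk
    obtain ⟨n, rfl | rfl⟩ : ∃ n : ℕ, k = n ∨ k = -(n:ℤ) := ⟨k.natAbs, Int.natAbs_eq k⟩
    · exact key n (by simpa using hk)
    · rw [hsymm, Complex.norm_conj]
      exact key n (by simpa using hk)
  refine ⟨main, ?_⟩
  intro ε hε hε'
  have hcL : 0 < c / L := by positivity
  have hset : {m : ℤ | Real.sqrt (‖η 0 - η m‖) < ε} = {0} := by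
    ext m
    simp only [Set.mem_setOf_eq, Set.mem_singleton_iff]
    constructor
    · intro h
      by_contra hm
      have h1 := main m hm
      have h3 : A - ‖η m‖ ≤ ‖η 0 - η m‖ := by
        calc A - ‖η m‖ ≤ |A - ‖η m‖| := le_abs_self _
          _ ≤ ‖η 0 - η m‖ := abs_norm_sub_norm_le _ _
      have h2 : c / L < ‖η 0 - η m‖ := by linarith
      have : Real.sqrt (c / L) ≤ Real.sqrt (‖η 0 - η m‖) :=
        Real.sqrt_le_sqrt h2.le
      linarith
    · intro h; subst h
      simp [hε]
  refine ⟨hset, ?_⟩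
  rw [hset]
  rintro ⟨R, hR, hall⟩
  obtain ⟨m, hm, h1, h2⟩ := hall 1
  simp only [Set.mem_singleton_iff] at hm
  omega
end

section
/- Let n ≥ 1, let 𝒜 be the additive group ℤ/nℤ, let b_0, b_1 ∈ ℤ/nℤ with b_1 of additive order n, and let ρ_cyc be the substitution of constant length n+1 on 𝒜 given by ρ_cyc(θ) = (θ+b_0)(θ+b_0+b_1)(θ+b_0+2b_1)⋯(θ+b_0+(n−1)b_1)(θ+b_0). Then every element x of the subshift X_{ρ_cyc} satisfies x_{m+1} = x_m + b_1 for all m ∈ ℤ; in particular σ^n(x) = x for every x ∈ X_{ρ_cyc}, so the subshift defined by ρ_cyc is periodic. -/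
/-- One substitution step applied letterwise to a word. -/
def substWord {A : Type*} (ρ : A → List A) : List A → List A :=
  fun l => l.flatMap ρ

/-- The word `ρ^p(a)`. -/
def substIter {A : Type*} (ρ : A → List A) (p : ℕ) (a : A) : List A :=
  (substWord ρ)^[p] [a]

/-- `u` occurs as a subword of the word `l` (at some position `i`). -/
def OccursIn {A : Type*} {n : ℕ} (u : Fin n → A) (l : List A) : Prop :=
  ∃ i : ℕ, ∀ t : Fin n, l[i + (t : ℕ)]? = some (u t)

/-- The words admitted by `ρ`: subwords of some `ρ^p(a)`, `p ≥ 1`. -/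
def Admitted {A : Type*} (ρ : A → List A) (n : ℕ) : Set (Fin n → A) :=
  {u | ∃ (a : A) (p : ℕ), 1 ≤ p ∧ OccursIn u (substIter ρ p a)}

/-- The legal words: the closure of the admitted words in `A^n`. -/
def Legal {A : Type*} [TopologicalSpace A] (ρ : A → List A) (n : ℕ) :
    Set (Fin n → A) :=
  closure (Admitted ρ n)

/-- The subshift of `ρ`: all bi-infinite sequences all of whose finite
subwords are legal. -/
def SubshiftOf {A : Type*} [TopologicalSpace A] (ρ : A → List A) :
    Set (ℤ → A) :=
  {x | ∀ (i : ℤ) (n : ℕ), (fun t : Fin n => x (i + (t : ℤ))) ∈ Legal ρ n}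

/-- A finite alphabet carries the discrete topology. -/
instance (n : ℕ) : TopologicalSpace (ZMod n) := ⊥

/-- For `b_0, b_1 ∈ ℤ/nℤ` with `b_1` of additive order `n`,
the substitution
`ρ_cyc(θ) = (θ+b_0)(θ+b_0+b_1)⋯(θ+b_0+(n−1)b_1)(θ+b_0)` of constant length
`n+1` generates a periodic subshift: every `x ∈ X_{ρ_cyc}` satisfies
`x_{m+1} = x_m + b_1` for all `m`, and in particular `σ^n(x) = x`. -/
theorem cyclic_substitution_periodic (n : ℕ) (hn : 1 ≤ n)
    (b0 b1 : ZMod n) (hb1 : addOrderOf b1 = n) :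
    (∀ x ∈ SubshiftOf (fun θ : ZMod n =>
        (List.ofFn fun i : Fin n => θ + b0 + (i : ℕ) • b1) ++ [θ + b0]),
      ∀ m : ℤ, x (m + 1) = x m + b1) ∧
    ∀ x ∈ SubshiftOf (fun θ : ZMod n =>
        (List.ofFn fun i : Fin n => θ + b0 + (i : ℕ) • b1) ++ [θ + b0]),
      ∀ m : ℤ, x (m + (n : ℤ)) = x m := by
    classical
  set ρ : ZMod n → List (ZMod n) := fun θ =>
    (List.ofFn fun i : Fin n => θ + b0 + (i : ℕ) • b1) ++ [θ + b0] with hρdef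
  have hnb : n • b1 = 0 := by
    have h := addOrderOf_nsmul_eq_zero b1
    rwa [hb1] at h
  set R : ZMod n → ZMod n → Prop := fun a c => c = a + b1 with hRdef
  -- alternative description of `ρ`
  have hρ' : ∀ θ, ρ θ = List.ofFn (fun i : Fin (n + 1) => θ + b0 + (i : ℕ) • b1) := by
    intro θ
    rw [List.ofFn_succ']
    simp [hρdef, List.concat_eq_append, hnb]
  have hchain : ∀ θ, List.Chain' R (ρ θ) := by
    intro θ
    rw [hρ' θ]
    unfold List.Chain'
    rw [List.isChain_ofFn]
    intro i hi
    show θ + b0 + (i + 1) • b1 = θ + b0 + i • b1 + b1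
    rw [succ_nsmul]
    abel
  have hhead : ∀ θ, (ρ θ).head? = some (θ + b0) := by
    intro θ
    rw [hρ' θ, List.ofFn_succ]
    simp
  have hlast : ∀ θ, (ρ θ).getLast? = some (θ + b0) := by
    intro θ
    rw [hρdef]
    exact List.getLast?_concat
  have hflat : ∀ w : List (ZMod n), List.Chain' R w → List.Chain' R (substWord ρ w) := by
    intro w
    induction w with
    | nil => intro _; simp [substWord]; exact List.isChain_nil
    | cons a w ih =>
      intro h
      have hw : List.Chain' R w := h.tail
      have : substWord ρ (a :: w) = ρ a ++ substWord ρ w := by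
        simp [substWord]
      rw [this]
      refine List.isChain_append.2 ⟨hchain a, ih hw, ?_⟩
      intro x hx y hy
      rw [hlast a] at hx
      simp only [Option.mem_def, Option.some.injEq] at hx
      subst hx
      cases w with
      | nil => simp [substWord] at hy
      | cons b w' =>
        have hRab : R a b := (List.isChain_cons_cons.1 h).1
        have : substWord ρ (b :: w') = ρ b ++ substWord ρ w' := by simp [substWord]
        rw [this, List.head?_append_of_ne_nil, hhead b] at hy
        · simp only [Option.mem_def, Option.some.injEq] at hy
          subst hy
          have hab : b = a + b1 := hRab
          show b + b0 = a + b0 + b1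
          rw [hab]
          abel
        · rw [hρ' b]
          simp
  have hiter : ∀ (p : ℕ) (a : ZMod n), List.Chain' R (substIter ρ p a) := by
    intro p a
    induction p with
    | zero => exact List.isChain_singleton a
    | succ p ih =>
      rw [substIter, Function.iterate_succ_apply']
      exact hflat _ ih
  have hpair : ∀ (l : List (ZMod n)), List.Chain' R l → ∀ (i : ℕ) (a c : ZMod n),
      l[i]? = some a → l[i + 1]? = some c → c = a + b1 := by
    intro l hl i a c ha hc
    rw [List.getElem?_eq_some_iff] at ha hc
    obtain ⟨h1, e1⟩ := ha
    obtain ⟨h2, e2⟩ := hc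
    have := List.isChain_iff_getElem.1 hl i (by omega)
    rw [show l[i] = a from e1, show l[i + 1] = c from e2] at this
    exact this
  have hAdm : ∀ u ∈ Admitted ρ 2, u 1 = u 0 + b1 := by
    rintro u ⟨a, p, hp, i, hocc⟩
    have h0 := hocc 0
    have h1 := hocc 1
    simp only [Fin.val_zero, Fin.val_one, Nat.add_zero] at h0 h1
    exact hpair _ (hiter p a) i _ _ h0 h1
  haveI : DiscreteTopology (ZMod n) := ⟨rfl⟩
  have hLegal : Legal ρ 2 = Admitted ρ 2 := (isClosed_discrete _).closure_eq
  have key : ∀ x ∈ SubshiftOf ρ, ∀ m : ℤ, x (m + 1) = x m +b1 := by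
    intro x hx m
    have h := hx m 2
    rw [hLegal] at h
    have := hAdm _ h
    simpa using this
  refine ⟨key, ?_⟩
  intro x hx m
  have hk : ∀ k : ℕ, x (m + k) = x m + k • b1 := by
    intro k
    induction k with
    | zero => simp
    | succ k ih =>
      have h1 : (m + ((k + 1 : ℕ) : ℤ)) = (m + (k : ℤ)) + 1 := by push_cast; ring
      rw [h1, key x hx (m + k), ih, succ_nsmul, add_assoc]
  have := hk n
  rw [hnb, add_zero] at this
  exact this
end

section
/- Let 𝒜 be a compact Hausdorff abelian topological group, L ≥ 2, β_0, …, β_{L−1} ∈ 𝒜, 0 ≤ s ≤ L−1, let C ⊆ {0, …, L−1} be nonempty with p = |C|, and let w : ℤ → 𝒜 satisfy: w_{Lm+k−s} = β_k for all m ∈ ℤ and k ∈ C (coincident columns), and w_{Lm+k−s} = w_m β_k for all m ∈ ℤ and k ∉ C. Let χ be a unitary character of 𝒜, and suppose the autocorrelation coefficient η(m) exists for every m ∈ ℤ. Then for every ε > 0 the set of ε-almost periods P_ε = {m ∈ ℤ : |η(0) − η(m)|^{1/2} < ε} is relatively dense in ℤ. -/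
open Finset Filter in
private lemma sum_blocks (f : ℤ → ℂ) (L : ℕ) (hL : 0 < L) (s : ℤ) (M : ℕ) :
    ∑ n ∈ Finset.Icc (-(M:ℤ)) M, ∑ k ∈ Finset.range L, f ((L:ℤ)*n + k - s)
    = ∑ j ∈ Finset.Icc (-((L:ℤ)*M) - s) ((L:ℤ)*M + ((L:ℤ)-1) - s), f j := by
  have hL' : (0:ℤ) < L := by exact_mod_cast hL
  rw [← Finset.sum_product']
  refine Finset.sum_nbij' (fun q => (L:ℤ)*q.1 + q.2 - s)
    (fun j => (((j+s) / L : ℤ), ((j+s) % (L:ℤ)).toNat) ) ?_ ?_ ?_ ?_ ?_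
  · rintro ⟨n, k⟩ hq
    simp only [Finset.mem_product, Finset.mem_Icc, Finset.mem_range] at hq
    obtain ⟨⟨h1, h2⟩, h3⟩ := hq
    simp only [Finset.mem_Icc]
    have hk0 : (0:ℤ) ≤ k := Int.natCast_nonneg k
    have hk1 : (k:ℤ) ≤ (L:ℤ) - 1 := by
      have : (k:ℤ) < L := by exact_mod_cast h3
      omega
    constructor
    · have e1 : (L:ℤ)*(-(M:ℤ)) ≤ L*n := by
        apply mul_le_mul_of_nonneg_left h1 (le_of_lt hL')
      have e2 : (L:ℤ)*(-(M:ℤ)) = -((L:ℤ)*M) := by ring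
      omega
    · have : (L:ℤ)*n ≤ L*M := by
        apply mul_le_mul_of_nonneg_left h2 (le_of_lt hL')
      omega
  · intro j hj
    simp only [Finset.mem_Icc] at hj
    obtain ⟨h1, h2⟩ := hj
    simp only [Finset.mem_product, Finset.mem_Icc, Finset.mem_range]
    refine ⟨⟨?_, ?_⟩, ?_⟩
    · rw [Int.le_ediv_iff_mul_le hL']
      have e2 : (-(M:ℤ))*(L:ℤ) = -((L:ℤ)*M) := by ring
      omega
    · have : (j+s)/(L:ℤ) < M + 1 := by
        rw [Int.ediv_lt_iff_lt_mul hL']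
        have : ((M:ℤ)+1)*L = (L:ℤ)*M + L := by ring
        omega
      omega
    · have h3 := Int.emod_lt_of_pos (j+s) hL'
      have h4 := Int.emod_nonneg (j+s) (ne_of_gt hL')
      omega
  · rintro ⟨n, k⟩ hq
    simp only [Finset.mem_product, Finset.mem_Icc, Finset.mem_range] at hq
    obtain ⟨⟨h1, h2⟩, h3⟩ := hq
    have e : (L:ℤ)*n + k - s + s = (k:ℤ) + (L:ℤ)*n := by ring
    have hk : (0:ℤ) ≤ k := Int.natCast_nonneg k
    have hkL : (k:ℤ) < L := by exact_mod_cast h3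
    rw [Prod.mk.injEq]
    constructor
    · rw [e, Int.add_mul_ediv_left _ _ (ne_of_gt hL'), Int.ediv_eq_zero_of_lt hk hkL]
      ring
    · rw [e, Int.add_mul_emod_self_left, Int.emod_eq_of_lt hk hkL]
      exact Int.toNat_natCast k
  · intro j hj
    have h5 := Int.mul_ediv_add_emod (j+s) L
    have h4 := Int.emod_nonneg (j+s) (by positivity : (L:ℤ) ≠ 0)
    show (L:ℤ) * ((j+s)/L) + (((j+s)%(L:ℤ)).toNat : ℤ) - s = j
    rw [Int.toNat_of_nonneg h4]
    omega
  · rintro ⟨n, k⟩ hq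
    rfl

open Finset Filter in
private lemma cne (n : ℕ) : (2*(n:ℂ)+1) ≠ 0 := by
  have h : ((2*(n:ℝ)+1 : ℝ) : ℂ) ≠ 0 := by
    rw [Complex.ofReal_ne_zero]; positivity
  simpa using h

open Finset Filter in
private lemma cnorm (n : ℕ) : ‖(2*(n:ℂ)+1)‖ = 2*(n:ℝ)+1 := by
  have : (2*(n:ℂ)+1) = ((2*(n:ℝ)+1 : ℝ) : ℂ) := by push_cast; ring
  rw [this, Complex.norm_real, Real.norm_eq_abs, abs_of_pos (by positivity)]

open Finset Filter in
private lemma Mtend (L : ℕ) (hL : 0 < L) :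
    Tendsto (fun N : ℕ => N / L - 1) atTop atTop := by
  refine tendsto_atTop_atTop.mpr fun b => ⟨L*(b+1), fun n hn => ?_⟩
  have : b + 1 ≤ n / L := by
    rw [Nat.le_div_iff_mul_le hL, mul_comm]; exact hn
  omega

open Finset Filter in
private lemma denomTend : Tendsto (fun N : ℕ => (2*(N:ℝ)+1)) atTop atTop := by
  apply Filter.tendsto_atTop_add_const_right
  exact Filter.Tendsto.const_mul_atTop two_pos tendsto_natCast_atTop_atTop

open Finset Filter in
private lemma hauto_aux {A : Type*} [CommGroup A]
    (L : ℕ) (hL : 2 ≤ L) (β : Fin L → A) (s : ℕ) (hs : s ≤ L - 1)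
    (C : Finset (Fin L))
    (w : ℤ → A)
    (hwC : ∀ (m : ℤ) (k : Fin L), k ∈ C →
      w ((L : ℤ) * m + (k : ℤ) - (s : ℤ)) = β k)
    (hwT : ∀ (m : ℤ) (k : Fin L), k ∉ C →
      w ((L : ℤ) * m + (k : ℤ) - (s : ℤ)) = w m * β k)
    (χ : A →* ℂ) (hχunit : ∀ a : A, ‖χ a‖ = 1)
    (m : ℤ) (z : ℂ)
    (hz : Tendsto (fun M : ℕ => (∑ n ∈ Finset.Icc (-(M:ℤ)) (M:ℤ),
        χ (w n) * (starRingEnd ℂ) (χ (w (n + m)))) / (2*(M:ℂ)+1)) atTop (nhds z)) :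
    Tendsto (fun N : ℕ => (∑ j ∈ Finset.Icc (-(N:ℤ)) (N:ℤ),
        χ (w j) * (starRingEnd ℂ) (χ (w (j + (L:ℤ)*m)))) / (2*(N:ℂ)+1)) atTop
      (nhds (((C.card:ℂ) + ((L - C.card : ℕ):ℂ) * z)/(L:ℂ))) := by
  classical
  have hL0 : 0 < L := by omega
  have hpL : C.card ≤ L := by simpa using C.card_le_univ
  set f : ℤ → ℂ := fun j => χ (w j) * (starRingEnd ℂ) (χ (w (j + (L:ℤ)*m))) with hf
  set g : ℤ → ℂ := fun n => χ (w n) * (starRingEnd ℂ) (χ (w (n + m))) with hg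
  set c : ℂ := ((L - C.card : ℕ):ℂ) with hc
  set T : ℕ → ℂ := fun M => ∑ n ∈ Finset.Icc (-(M:ℤ)) (M:ℤ), g n with hT
  have hterm : ∀ a b : A, ‖χ a * (starRingEnd ℂ) (χ b)‖ = 1 := by
    intro a b
    rw [norm_mul, Complex.norm_conj,
      hχunit, hχunit, mul_one]
  have hone : ∀ a : A, χ a * (starRingEnd ℂ) (χ a) = 1 := by
    intro a
    rw [Complex.mul_conj, Complex.normSq_eq_norm_sq, hχunit]
    norm_num
  -- row sums
  have hrow : ∀ n : ℤ, ∑ k ∈ Finset.range L, f ((L:ℤ)*n + (k:ℤ) - (s:ℤ))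
      = (C.card:ℂ) + c * g n := by
    intro n
    rw [← Fin.sum_univ_eq_sum_range (fun k : ℕ => f ((L:ℤ)*n + (k:ℤ) - (s:ℤ))) L]
    rw [← Finset.sum_add_sum_compl C]
    have h1 : ∀ k ∈ C, f ((L:ℤ)*n + ((k:ℕ):ℤ) - (s:ℤ)) = 1 := by
      intro k hk
      have e : (L:ℤ)*n + ((k:ℕ):ℤ) - s + (L:ℤ)*m = (L:ℤ)*(n+m) + ((k:ℕ):ℤ) - s := by ring
      have hcast : ((k:ℕ):ℤ) = (k:ℤ) := rfl
      simp only [hf, e, hcast, hwC n k hk, hwC (n+m) k hk]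
      exact hone _
    have h2 : ∀ k ∈ Cᶜ, f ((L:ℤ)*n + ((k:ℕ):ℤ) - (s:ℤ)) = g n := by
      intro k hk
      rw [Finset.mem_compl] at hk
      have e : (L:ℤ)*n + ((k:ℕ):ℤ) - s + (L:ℤ)*m = (L:ℤ)*(n+m) + ((k:ℕ):ℤ) - s := by ring
      have hcast : ((k:ℕ):ℤ) = (k:ℤ) := rfl
      simp only [hf, e, hcast, hwT n k hk, hwT (n+m) k hk, map_mul]
      calc χ (w n) * χ (β k) * ((starRingEnd ℂ) (χ (w (n+m))) * (starRingEnd ℂ) (χ (β k)))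
          = (χ (w n) * (starRingEnd ℂ) (χ (w (n+m)))) * (χ (β k) * (starRingEnd ℂ) (χ (β k))) := by
            ring
        _ = g n := by rw [hone, mul_one, hg]
    rw [Finset.sum_congr rfl h1, Finset.sum_congr rfl h2, Finset.sum_const, Finset.sum_const,
      Finset.card_compl, Fintype.card_fin, nsmul_eq_mul, nsmul_eq_mul, mul_one, hc]
  -- block sums
  have hblock : ∀ M : ℕ,
      ∑ j ∈ Finset.Icc (-((L:ℤ)*M) - (s:ℤ)) ((L:ℤ)*M + ((L:ℤ)-1) - (s:ℤ)), f j
      = (2*(M:ℂ)+1) * (C.card:ℂ) + c * T M := by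
    intro M
    rw [← sum_blocks f L hL0 s M]
    have h1 : ∀ n ∈ Finset.Icc (-(M:ℤ)) (M:ℤ),
        ∑ k ∈ Finset.range L, f ((L:ℤ)*n + (k:ℤ) - (s:ℤ)) = (C.card:ℂ) + c * g n :=
      fun n _ => hrow n
    rw [Finset.sum_congr rfl h1, Finset.sum_add_distrib, Finset.sum_const, ← Finset.mul_sum,
      Int.card_Icc]
    have h2 : ((M:ℤ) + 1 - -(M:ℤ)).toNat = 2*M+1 := by omega
    rw [h2, nsmul_eq_mul, hT]
    push_cast
    ring
  -- setup of the comparison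
  set MN : ℕ → ℕ := fun N => N / L - 1 with hMN
  set Bs : ℕ → Finset ℤ :=
    fun N => Finset.Icc (-((L:ℤ)*(MN N)) - (s:ℤ)) ((L:ℤ)*(MN N) + ((L:ℤ)-1) - (s:ℤ)) with hBs
  -- basic arithmetic facts for N ≥ L
  have harith : ∀ N : ℕ, L ≤ N → ∃ q' : ℕ, MN N = q' ∧ L*(q'+1) ≤ N ∧ N < L*(q'+1) + L := by
    intro N hN
    have h1 : L * (N / L) + N % L = N := Nat.div_add_mod N L
    have h2 : N % L < L := Nat.mod_lt _ hL0
    have h3 : 1 ≤ N / L := (Nat.one_le_div_iff hL0).mpr hN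
    refine ⟨N/L - 1, rfl, ?_, ?_⟩
    · have e : L * ((N/L - 1) + 1) = L * (N/L) := by congr 1; omega
      omega
    · have e : L * ((N/L - 1) + 1) = L * (N/L) := by congr 1; omega
      omega
  have hsub : ∀ N : ℕ, L ≤ N → Bs N ⊆ Finset.Icc (-(N:ℤ)) (N:ℤ) := by
    intro N hN
    obtain ⟨q', hq, h1, h2⟩ := harith N hN
    intro j hj
    rw [hBs] at hj
    simp only [Finset.mem_Icc] at hj ⊢
    have hsZ : (s:ℤ) ≤ (L:ℤ) - 1 := by omega
    have e1 : ((MN N : ℕ):ℤ) = (q' : ℤ) := by rw [hq]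
    rw [e1] at hj
    have e2 : (L:ℤ)*(q':ℤ) + (L:ℤ) = ((L*(q'+1) : ℕ) : ℤ) := by push_cast; ring
    have h1' : ((L*(q'+1) : ℕ) : ℤ) ≤ (N:ℤ) := by exact_mod_cast h1
    omega
  have hcard : ∀ N : ℕ, L ≤ N →
      ((Finset.Icc (-(N:ℤ)) (N:ℤ) \ Bs N).card : ℝ) ≤ 3*L := by
    intro N hN
    obtain ⟨q', hq, h1, h2⟩ := harith N hN
    rw [Finset.card_sdiff_of_subset (hsub N hN), Int.card_Icc, hBs, Int.card_Icc]
    have e1 : ((N:ℤ) + 1 - -(N:ℤ)).toNat = 2*N+1 := by omega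
    have e2 : ((L:ℤ)*(MN N) + ((L:ℤ)-1) - (s:ℤ) + 1 - (-((L:ℤ)*(MN N)) - (s:ℤ)))
        = ((2*(L*q') + L : ℕ) : ℤ) := by
      have e1' : ((MN N : ℕ):ℤ) = (q' : ℤ) := by rw [hq]
      rw [e1']; push_cast; ring
    rw [e1, e2, Int.toNat_natCast]
    have e3 : L*(q'+1) = L*q' + L := by ring
    have e4 : 2*N+1 - (2*(L*q') + L) ≤ 3*L := by omega
    calc ((2*N+1 - (2*(L*q') + L) : ℕ) : ℝ) ≤ ((3*L : ℕ) : ℝ) := by exact_mod_cast e4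
      _ = 3*L := by push_cast; ring
  -- the three tendsto components
  have hu : Tendsto (fun N : ℕ => T (MN N) / (2*((MN N : ℕ):ℂ)+1)) atTop (nhds z) :=
    hz.comp (Mtend L hL0)
  set a : ℕ → ℝ := fun N => (2*((MN N : ℕ):ℝ)+1)/(2*(N:ℝ)+1) with ha'
  have hbound : Tendsto (fun N : ℕ => (3*L:ℝ)/(2*(N:ℝ)+1)) atTop (nhds 0) :=
    tendsto_const_nhds.div_atTop denomTend
  have hbound3 : Tendsto (fun N : ℕ => (4:ℝ)/(2*(N:ℝ)+1)) atTop (nhds 0) :=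
    tendsto_const_nhds.div_atTop denomTend
  have ha : Tendsto a atTop (nhds ((L:ℝ)⁻¹)) := by
    have hstep : ∀ᶠ N in atTop, ‖a N - (L:ℝ)⁻¹‖ ≤ 4/(2*(N:ℝ)+1) := by
      filter_upwards [eventually_ge_atTop L] with N hN
      obtain ⟨q', hq, h1, h2⟩ := harith N hN
      have hXpos : (0:ℝ) < 2*(N:ℝ)+1 := by positivity
      have hLpos : (0:ℝ) < (L:ℝ) := by exact_mod_cast hL0
      have haN : a N = (2*(q':ℝ)+1)/(2*(N:ℝ)+1) := by
        rw [ha']; norm_num [hq]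
      have h1' : (L:ℝ)*(q'+1) ≤ (N:ℝ) := by exact_mod_cast h1
      have h2' : (N:ℝ) < (L:ℝ)*(q'+1) + L := by exact_mod_cast h2
      have hid : (L:ℝ)*(2*(q':ℝ)+1) = 2*((L:ℝ)*(q'+1)) - L := by ring
      have e1 : a N - (L:ℝ)⁻¹
          = ((L:ℝ)*(2*(q':ℝ)+1) - (2*(N:ℝ)+1))/((L:ℝ)*(2*(N:ℝ)+1)) := by
        rw [haN]; field_simp
      have hnum : (L:ℝ)*(2*(q':ℝ)+1) - (2*(N:ℝ)+1) ≤ 0 := by nlinarith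
      have hden : (0:ℝ) < (L:ℝ)*(2*(N:ℝ)+1) := mul_pos hLpos hXpos
      rw [Real.norm_eq_abs, e1, abs_div, abs_of_nonpos hnum, abs_of_pos hden, neg_sub]
      rw [div_le_div_iff₀ hden hXpos]
      have hL1 : (1:ℝ) ≤ (L:ℝ) := Nat.one_le_cast.mpr hL0
      have hnum2 : (2*(N:ℝ)+1) - (L:ℝ)*(2*(q':ℝ)+1) ≤ 4*L := by nlinarith
      nlinarith [mul_le_mul_of_nonneg_right hnum2 (le_of_lt hXpos)]
    have h0 : Tendsto (fun N => a N - (L:ℝ)⁻¹) atTop (nhds 0) :=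
      squeeze_zero_norm' hstep hbound3
    have := h0.add_const ((L:ℝ)⁻¹)
    simpa using this
  have haC : Tendsto (fun N : ℕ => ((a N : ℝ) : ℂ)) atTop (nhds (((L:ℝ)⁻¹ : ℝ) : ℂ)) :=
    (Complex.continuous_ofReal.tendsto _).comp ha
  set d : ℕ → ℂ :=
    fun N => (∑ j ∈ Finset.Icc (-(N:ℤ)) (N:ℤ) \ Bs N, f j)/(2*(N:ℂ)+1) with hd'
  have hd : Tendsto d atTop (nhds 0) := by
    apply squeeze_zero_norm' (a := fun N : ℕ => (3*L:ℝ)/(2*(N:ℝ)+1)) _ hbound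
    filter_upwards [eventually_ge_atTop L] with N hN
    rw [hd', norm_div, cnorm]
    have hnum : ‖∑ j ∈ Finset.Icc (-(N:ℤ)) (N:ℤ) \ Bs N, f j‖
        ≤ ((Finset.Icc (-(N:ℤ)) (N:ℤ) \ Bs N).card : ℝ) := by
      refine (norm_sum_le _ _).trans ?_
      have : ∀ j ∈ Finset.Icc (-(N:ℤ)) (N:ℤ) \ Bs N, ‖f j‖ = 1 := fun j _ => hterm _ _
      rw [Finset.sum_congr rfl this, Finset.sum_const, nsmul_eq_mul, mul_one]
    have hXpos : (0:ℝ) < 2*(N:ℝ)+1 := by positivity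
    gcongr
    exact hnum.trans (hcard N hN)
  -- assemble
  have hG : Tendsto (fun N : ℕ =>
        ((a N : ℝ) : ℂ) * ((C.card:ℂ) + c * (T (MN N) / (2*((MN N : ℕ):ℂ)+1))) + d N)
      atTop (nhds ((((L:ℝ)⁻¹ : ℝ):ℂ) * ((C.card:ℂ) + c * z) + 0)) :=
    (haC.mul (tendsto_const_nhds.add (tendsto_const_nhds.mul hu))).add hd
  have hlim : ((((L:ℝ)⁻¹ : ℝ):ℂ) * ((C.card:ℂ) + c * z) + 0)
      = ((C.card:ℂ) + ((L - C.card : ℕ):ℂ) * z)/(L:ℂ) := by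
    rw [hc]
    push_cast
    ring
  rw [hlim] at hG
  refine hG.congr' ?_
  filter_upwards [eventually_ge_atTop L] with N hN
  have hsplit := Finset.sum_sdiff (f := f) (hsub N hN)
  have h2M : (2*((MN N : ℕ):ℂ)+1) ≠ 0 := cne (MN N)
  have h2N : (2*(N:ℂ)+1) ≠ 0 := cne N
  have haNC : ((a N : ℝ) : ℂ) = (2*((MN N : ℕ):ℂ)+1)/(2*(N:ℂ)+1) := by
    rw [ha']; push_cast; ring
  rw [← hsplit]
  have hBsum : ∑ x ∈ Bs N, f x = (2*((MN N : ℕ):ℂ)+1) * (C.card:ℂ) + c * T (MN N) := by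
    rw [hBs]
    exact hblock (MN N)
  rw [hBsum, haNC, hd']
  field_simp
  ring

open Finset Filter

/-- For a pseudo-fixed point `w` of a constant-length-`L`
substitution on a compact Hausdorff abelian group whose columns at positions
`k ∈ C` (with `C ≠ ∅`) are the coincidences `θ ↦ β_k` and whose other columns
are the translations `θ ↦ θβ_k`, weighted by a unitary character `χ`: if all
autocorrelation coefficients `η(m)` exist, then for every `ε > 0` the set of
`ε`-almost periods `P_ε = {m : |η(0) − η(m)|^{1/2} < ε}` is relatively dense
in `ℤ`. -/
theorem coincidence_relatively_dense_almost_periods {A : Type*}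
    [TopologicalSpace A] [CompactSpace A] [T2Space A] [CommGroup A]
    [IsTopologicalGroup A]
    (L : ℕ) (hL : 2 ≤ L) (β : Fin L → A) (s : ℕ) (hs : s ≤ L - 1)
    (C : Finset (Fin L)) (hC : C.Nonempty)
    (w : ℤ → A)
    (hwC : ∀ (m : ℤ) (k : Fin L), k ∈ C →
      w ((L : ℤ) * m + (k : ℤ) - (s : ℤ)) = β k)
    (hwT : ∀ (m : ℤ) (k : Fin L), k ∉ C →
      w ((L : ℤ) * m + (k : ℤ) - (s : ℤ)) = w m * β k)
    (χ : A →* ℂ) (hχcont : Continuous χ)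
    (hχunit : ∀ a : A, ‖χ a‖ = 1)
    (η : ℤ → ℂ) (hη : ∀ m : ℤ, AutoCorr χ w m (η m)) :
    ∀ ε : ℝ, 0 < ε →
      RelDense {m : ℤ | Real.sqrt ‖η 0 - η m‖ < ε} := by
  classical
  have hL0 : 0 < L := by omega
  have hp1 : 1 ≤ C.card := hC.card_pos
  have hpL : C.card ≤ L := by
    have := C.card_le_univ
    simpa using this
  set p : ℕ := C.card with hpdef
  -- norm of each correlation term is 1
  have hterm : ∀ a b : A, ‖χ a * (starRingEnd ℂ) (χ b)‖ = 1 := by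
    intro a b
    rw [norm_mul, Complex.norm_conj,
      hχunit, hχunit, mul_one]
  -- η 0 = 1
  have hη0 : η 0 = 1 := by
    refine tendsto_nhds_unique (hη 0) ?_
    have he : ∀ N : ℕ, (∑ j ∈ Finset.Icc (-(N:ℤ)) (N:ℤ),
        χ (w j) * (starRingEnd ℂ) (χ (w (j + 0)))) / (2*(N:ℂ)+1) = 1 := by
      intro N
      have h1 : ∀ j ∈ Finset.Icc (-(N:ℤ)) (N:ℤ),
          χ (w j) * (starRingEnd ℂ) (χ (w (j + 0))) = 1 := by
        intro j _
        rw [add_zero, Complex.mul_conj, Complex.normSq_eq_norm_sq, hχunit]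
        norm_num
      rw [Finset.sum_congr rfl h1, Finset.sum_const, Int.card_Icc]
      have h2 : ((N:ℤ) + 1 - -(N:ℤ)).toNat = 2*N+1 := by omega
      rw [h2]
      have h3 : ((2*N+1 : ℕ) : ℂ) = 2*(N:ℂ)+1 := by push_cast; ring
      rw [nsmul_eq_mul, mul_one, h3, div_self (cne N)]
    exact Tendsto.congr (fun N => (he N).symm) tendsto_const_nhds
  -- |η m| ≤ 1
  have hbd : ∀ m : ℤ, ‖η m‖ ≤ 1 := by
    intro m
    refine le_of_tendsto (hη m).norm (Eventually.of_forall fun N => ?_)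
    rw [norm_div]
    have h3 : ‖(2*(N:ℂ)+1)‖ = 2*(N:ℝ)+1 := by
      have : (2*(N:ℂ)+1) = ((2*(N:ℝ)+1 : ℝ) : ℂ) := by push_cast; ring
      rw [this, Complex.norm_real, Real.norm_eq_abs, abs_of_pos (by positivity)]
    rw [h3]
    have h4 : ‖∑ j ∈ Finset.Icc (-(N:ℤ)) (N:ℤ),
        χ (w j) * (starRingEnd ℂ) (χ (w (j + m)))‖ ≤ 2*(N:ℝ)+1 := by
      refine (norm_sum_le _ _).trans ?_
      have : ∀ j ∈ Finset.Icc (-(N:ℤ)) (N:ℤ),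
          ‖χ (w j) * (starRingEnd ℂ) (χ (w (j + m)))‖ = 1 := fun j _ => hterm _ _
      rw [Finset.sum_congr rfl this, Finset.sum_const, Int.card_Icc, nsmul_eq_mul, mul_one]
      have h2 : ((N:ℤ) + 1 - -(N:ℤ)).toNat = 2*N+1 := by omega
      rw [h2]; push_cast; linarith
    exact div_le_one_of_le₀ h4 (by positivity)
  -- the key autocorrelation recursion
  have hauto : ∀ m : ℤ,
      Filter.Tendsto (fun N : ℕ =>
        (∑ j ∈ Finset.Icc (-(N : ℤ)) (N : ℤ),
            χ (w j) * (starRingEnd ℂ) (χ (w (j + (L:ℤ)*m)))) / (2 * (N : ℂ) + 1))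
      Filter.atTop (nhds (((p:ℂ) + ((L-p : ℕ):ℂ) * η m)/(L:ℂ))) :=
    fun m => hauto_aux L hL β s hs C w hwC hwT χ hχunit m (η m) (hη m)
  have key : ∀ m : ℤ, η 0 - η ((L:ℤ)*m) = (((L-p : ℕ):ℂ)/(L:ℂ)) * (η 0 - η m) := by
    intro m
    have h1 : η ((L:ℤ)*m) = ((p:ℂ) + ((L-p : ℕ):ℂ) * η m)/(L:ℂ) :=
      tendsto_nhds_unique (hη ((L:ℤ)*m)) (hauto m)
    have hLne : (L:ℂ) ≠ 0 := by
      simpa using (by positivity : ((L:ℝ)) ≠ 0)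
    have hcast : ((L-p : ℕ):ℂ) = (L:ℂ) - (p:ℂ) := by
      push_cast [Nat.cast_sub hpL]; ring
    rw [h1, hη0, hcast]
    field_simp
    ring
  -- iterate
  set r : ℝ := ((L-p : ℕ):ℝ)/(L:ℝ) with hrdef
  have hr0 : 0 ≤ r := by positivity
  have hr1 : r < 1 := by
    rw [hrdef, div_lt_one (by positivity : (0:ℝ) < L)]
    exact_mod_cast (by omega : L - p < L)
  have habs : ‖((L-p : ℕ):ℂ)/(L:ℂ)‖ = r := by
    rw [norm_div, Complex.norm_natCast, Complex.norm_natCast]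
  have iter : ∀ t : ℕ, ∀ m : ℤ, ‖η 0 - η ((L:ℤ)^t * m)‖ ≤ 2 * r^t := by
    intro t
    induction t with
    | zero =>
      intro m
      simp only [pow_zero, one_mul, mul_one]
      have h1 := norm_sub_le (η 0) (η m)
      have h2 := hbd 0; have h3 := hbd m
      linarith
    | succ t ih =>
      intro m
      have h1 : (L:ℤ)^(t+1) * m = (L:ℤ) * ((L:ℤ)^t * m) := by ring
      rw [h1, key, norm_mul, habs]
      calc r * ‖η 0 - η ((L:ℤ)^t * m)‖ ≤ r * (2 * r^t) :=
            mul_le_mul_of_nonneg_left (ih m) hr0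
        _ = 2 * r^(t+1) := by ring
  -- conclude
  intro ε hε
  have hpow : Tendsto (fun t : ℕ => r^t) atTop (nhds 0) :=
    tendsto_pow_atTop_nhds_zero_of_lt_one hr0 hr1
  have : ∀ᶠ t : ℕ in atTop, r^t < ε^2/2 := by
    have hεpos : (0:ℝ) < ε^2/2 := by positivity
    exact hpow.eventually (gt_mem_nhds hεpos)
  obtain ⟨t, ht⟩ := this.exists
  refine ⟨L^t, pow_pos hL0 t, fun a => ?_⟩
  set b : ℤ := (L:ℤ)^t with hbdef
  have hb : 0 < b := by positivity
  set n : ℤ := -((-a) / b) with hndef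
  refine ⟨b * n, ?_, ?_, ?_⟩
  · show Real.sqrt ‖η 0 - η (b * n)‖ < ε
    rw [Real.sqrt_lt' hε]
    have h2 : b * n = (L:ℤ)^t * n := by rw [hbdef]
    calc ‖η 0 - η (b * n)‖ ≤ 2 * r^t := by rw [h2]; exact iter t n
      _ < ε^2 := by linarith
  · have h1 := Int.mul_ediv_add_emod (-a) b
    have h2 := Int.emod_nonneg (-a) (ne_of_gt hb)
    have h3 := Int.emod_lt_of_pos (-a) hb
    have h4 : b * n = -(b * ((-a)/b)) := by rw [hndef]; ring
    omega
  · have h1 := Int.mul_ediv_add_emod (-a) b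
    have h2 := Int.emod_nonneg (-a) (ne_of_gt hb)
    have h3 := Int.emod_lt_of_pos (-a) hb
    have h4 : b * n = -(b * ((-a)/b)) := by rw [hndef]; ring
    have h5 : ((L^t : ℕ) : ℤ) = b := by rw [hbdef]; push_cast; ring
    omega
end

section
/- Let L ≥ 2, let p be an integer with 1 ≤ p ≤ L, and let η : ℤ → ℂ satisfy η(0) = 1, |η(m)| ≤ 1 for all m ∈ ℤ, and η(Lm) = p/L + ((L−p)/L)·η(m) for all m ∈ ℤ. Then for every ε > 0 the set {m ∈ ℤ : |1 − η(m)| < ε} is relatively dense in ℤ. Moreover, for every m ∈ ℤ one has η(L^ℓ m) → 1 as ℓ → ∞, uniformly in m. -/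
/-- If `η : ℤ → ℂ` satisfies `η 0 = 1`, `|η m| ≤ 1` and
`η(Lm) = p/L + ((L−p)/L)·η(m)` for `1 ≤ p ≤ L`, then for every `ε > 0` the set
`{m : |1 − η m| < ε}` is relatively dense in `ℤ`, and `η(L^ℓ m) → 1` as
`ℓ → ∞`, uniformly in `m`. -/
theorem coincidence_almost_periods (L : ℕ) (hL : 2 ≤ L) (p : ℕ)
    (hp1 : 1 ≤ p) (hpL : p ≤ L) (η : ℤ → ℂ)
    (hzero : η 0 = 1)
    (hbound : ∀ m : ℤ, ‖η m‖ ≤ 1)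
    (hrec : ∀ m : ℤ, η ((L : ℤ) * m) = (p : ℂ) / L + (((L : ℂ) - p) / L) * η m) :
    (∀ ε : ℝ, 0 < ε → RelDense {m : ℤ | ‖1 - η m‖ < ε}) ∧
    ∀ ε : ℝ, 0 < ε → ∃ N : ℕ, ∀ ℓ : ℕ, N ≤ ℓ → ∀ m : ℤ,
      ‖η ((L : ℤ) ^ ℓ * m) - 1‖ < ε := by
  have hL0 : (0:ℝ) < L := by positivity
  have hLC : (L:ℂ) ≠ 0 := by exact_mod_cast (by positivity : (0:ℝ) < L).ne'
  set c : ℝ := ((L:ℝ) - p) / L with hc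
  have hc0 : 0 ≤ c := by
    apply div_nonneg _ hL0.le
    have : (p:ℝ) ≤ L := by exact_mod_cast hpL
    linarith
  have hc1 : c < 1 := by
    rw [hc, div_lt_one hL0]
    have : (1:ℝ) ≤ p := by exact_mod_cast hp1
    linarith
  -- key identity
  have key : ∀ (ℓ : ℕ) (m : ℤ), 1 - η ((L:ℤ) ^ ℓ * m) = (((L:ℂ) - p) / L) ^ ℓ * (1 - η m) := by
    intro ℓ
    induction ℓ with
    | zero => intro m; simp
    | succ n ih =>
      intro m
      have : ((L:ℤ) ^ (n+1) * m) = (L:ℤ) * ((L:ℤ) ^ n * m) := by ring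
      rw [this, hrec]
      have h1 : (1:ℂ) - (p:ℂ)/L = ((L:ℂ) - p)/L := by
        field_simp
      calc 1 - ((p:ℂ)/L + ((L:ℂ) - p)/L * η ((L:ℤ)^n * m))
          = ((L:ℂ) - p)/L * (1 - η ((L:ℤ)^n * m)) := by rw [mul_sub, mul_one, ← h1]; ring
        _ = ((L:ℂ) - p)/L * ((((L:ℂ) - p)/L)^n * (1 - η m)) := by rw [ih m]
        _ = (((L:ℂ) - p)/L)^(n+1) * (1 - η m) := by ring
  have habsc : ‖((L:ℂ) - p) / L‖ = c := by
    have : ((L:ℂ) - p) / L = ((c:ℝ) : ℂ) := by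
      rw [hc]; push_cast; ring
    rw [this, Complex.norm_real, Real.norm_of_nonneg hc0]
  have keyabs : ∀ (ℓ : ℕ) (m : ℤ), ‖η ((L:ℤ) ^ ℓ * m) - 1‖ ≤ 2 * c ^ ℓ := by
    intro ℓ m
    have := key ℓ m
    have h2 : ‖1 - η m‖ ≤ 2 := by
      calc ‖1 - η m‖ ≤ ‖(1:ℂ)‖ + ‖η m‖ := by
            exact norm_sub_le _ _
        _ ≤ 1 + 1 := by simp [hbound m]
        _ = 2 := by norm_num
    calc ‖η ((L:ℤ) ^ ℓ * m) - 1‖ = ‖1 - η ((L:ℤ) ^ ℓ * m)‖ := by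
          rw [← norm_neg]; ring_nf
      _ = ‖(((L:ℂ) - p)/L) ^ ℓ * (1 - η m)‖ := by rw [this]
      _ = c ^ ℓ * ‖1 - η m‖ := by rw [norm_mul, norm_pow, habsc]
      _ ≤ c ^ ℓ * 2 := by exact mul_le_mul_of_nonneg_left h2 (pow_nonneg hc0 ℓ)
      _ = 2 * c ^ ℓ := by ring
  -- uniform convergence part
  have unif : ∀ ε : ℝ, 0 < ε → ∃ N : ℕ, ∀ ℓ : ℕ, N ≤ ℓ → ∀ m : ℤ,
      ‖η ((L : ℤ) ^ ℓ * m) - 1‖ < ε := by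
    intro ε hε
    have htend : Filter.Tendsto (fun n : ℕ => 2 * c ^ n) Filter.atTop (nhds 0) := by
      have := tendsto_pow_atTop_nhds_zero_of_lt_one hc0 hc1
      simpa using this.const_mul 2
    obtain ⟨N, hN⟩ := (Metric.tendsto_atTop.mp htend) ε hε
    refine ⟨N, fun ℓ hℓ m => ?_⟩
    have := hN ℓ hℓ
    rw [Real.dist_eq, sub_zero, abs_of_nonneg (by positivity)] at this
    exact lt_of_le_of_lt (keyabs ℓ m) this
  refine ⟨?_, unif⟩
  intro ε hε
  obtain ⟨N, hN⟩ := unif ε hε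
  refine ⟨L ^ N, pow_pos (by omega) N, fun a => ?_⟩
  set R : ℤ := (L:ℤ) ^ N with hR
  have hRpos : 0 < R := by positivity
  set r : ℤ := (-a) % R with hr
  have hr0 : 0 ≤ r := Int.emod_nonneg _ hRpos.ne'
  have hrR : r < R := Int.emod_lt_of_pos _ hRpos
  refine ⟨a + r, ?_, by linarith, by push_cast; linarith⟩
  have hdvd : R ∣ (a + r) := by
    have : a + r = a + (-a - R * ((-a) / R)) := by
      rw [hr, Int.emod_def]
    rw [this]
    exact ⟨-((-a)/R), by ring⟩
  obtain ⟨k, hk⟩ := hdvd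
  show ‖1 - η (a + r)‖ < ε
  have := hN N le_rfl k
  rw [← hR] at this
  rw [← hk] at this
  calc ‖1 - η (a + r)‖ = ‖η (a + r) - 1‖ := by
        rw [← norm_neg]; ring_nf
    _ < ε := this
end

section
/- Let 𝒜 be a compact Hausdorff abelian topological group, L ≥ 2, β_0, …, β_{L−1} ∈ 𝒜, 0 ≤ s ≤ L−1, let C ⊆ {0, …, L−1} with p = |C|, and let w : ℤ → 𝒜 satisfy w_{Lm+k−s} = β_k for all m ∈ ℤ, k ∈ C, and w_{Lm+k−s} = w_m β_k for all m ∈ ℤ, k ∉ C. Let χ be a unitary character of 𝒜 and fix m ∈ ℤ. If the autocorrelation coefficient η(m) exists, then η(Lm) exists and η(Lm) = p/L + ((L−p)/L)·η(m). -/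
open Finset Filter

private lemma norm_sum_le_card (h : ℤ → ℂ) (hb : ∀ j, ‖h j‖ ≤ 1) (t : Finset ℤ) :
    ‖∑ j ∈ t, h j‖ ≤ (t.card : ℝ) := by
  calc ‖∑ j ∈ t, h j‖ ≤ ∑ j ∈ t, ‖h j‖ := norm_sum_le _ _
    _ ≤ ∑ _j ∈ t, 1 := Finset.sum_le_sum fun j _ => hb j
    _ = t.card := by simp

private lemma norm_sum_sdiff {h : ℤ → ℂ} (hb : ∀ j, ‖h j‖ ≤ 1) {t u : Finset ℤ}
    (hu : u ⊆ t) : ‖(∑ j ∈ t, h j) - ∑ j ∈ u, h j‖ ≤ ((t \ u).card : ℝ) := by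
  rw [← Finset.sum_sdiff hu, add_sub_cancel_right]
  exact norm_sum_le_card h hb _

private lemma norm_sum_Ico_right {h : ℤ → ℂ} (hb : ∀ j, ‖h j‖ ≤ 1) (a b b' : ℤ) :
    ‖(∑ j ∈ Finset.Ico a b, h j) - ∑ j ∈ Finset.Ico a b', h j‖ ≤ ((b - b').natAbs : ℝ) := by
  have main : ∀ c d : ℤ, d ≤ c →
      ‖(∑ j ∈ Finset.Ico a c, h j) - ∑ j ∈ Finset.Ico a d, h j‖ ≤ ((c - d).natAbs : ℝ) := by
    intro c d hdc
    have hsub : Finset.Ico a d ⊆ Finset.Ico a c := Finset.Ico_subset_Ico le_rfl hdc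
    refine le_trans (norm_sum_sdiff hb hsub) ?_
    have hss : Finset.Ico a c \ Finset.Ico a d ⊆ Finset.Ico d c := by
      intro j hj
      simp only [Finset.mem_sdiff, Finset.mem_Ico, not_and, not_lt] at hj
      simp only [Finset.mem_Ico]
      omega
    have h1 := Finset.card_le_card hss
    have h2 : (Finset.Ico d c).card = (c - d).toNat := Int.card_Ico _ _
    have : (Finset.Ico a c \ Finset.Ico a d).card ≤ (c - d).natAbs := by omega
    exact_mod_cast this
  rcases le_total b' b with hle | hle
  · exact main b b' hle
  · rw [norm_sub_rev]
    have := main b' b hle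
    have heq : (b' - b).natAbs = (b - b').natAbs := by omega
    rwa [heq] at this

private lemma norm_sum_Ico_left {h : ℤ → ℂ} (hb : ∀ j, ‖h j‖ ≤ 1) (a a' b : ℤ) :
    ‖(∑ j ∈ Finset.Ico a b, h j) - ∑ j ∈ Finset.Ico a' b, h j‖ ≤ ((a - a').natAbs : ℝ) := by
  have main : ∀ c d : ℤ, c ≤ d →
      ‖(∑ j ∈ Finset.Ico c b, h j) - ∑ j ∈ Finset.Ico d b, h j‖ ≤ ((d - c).natAbs : ℝ) := by
    intro c d hcd
    have hsub : Finset.Ico d b ⊆ Finset.Ico c b := Finset.Ico_subset_Ico hcd le_rfl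
    refine le_trans (norm_sum_sdiff hb hsub) ?_
    have hss : Finset.Ico c b \ Finset.Ico d b ⊆ Finset.Ico c d := by
      intro j hj
      simp only [Finset.mem_sdiff, Finset.mem_Ico, not_and, not_lt] at hj
      simp only [Finset.mem_Ico]
      omega
    have h1 := Finset.card_le_card hss
    have h2 : (Finset.Ico c d).card = (d - c).toNat := Int.card_Ico _ _
    have : (Finset.Ico c b \ Finset.Ico d b).card ≤ (d - c).natAbs := by omega
    exact_mod_cast this
  rcases le_total a a' with hle | hle
  · have := main a a' hle
    have heq : (a' - a).natAbs = (a - a').natAbs := by omega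
    rwa [heq] at this
  · rw [norm_sub_rev]
    have := main a' a hle
    have heq : (a - a').natAbs = (a - a').natAbs := rfl
    exact this

private lemma sum_Ico_succ_top_int (f : ℤ → ℂ) {a b : ℤ} (h : a ≤ b) :
    ∑ j ∈ Finset.Ico a (b + 1), f j = (∑ j ∈ Finset.Ico a b, f j) + f b := by
  have : Finset.Ico a (b + 1) = insert b (Finset.Ico a b) := by
    ext j; simp only [Finset.mem_Ico, Finset.mem_insert]; omega
  rw [this, Finset.sum_insert (by simp), add_comm]

private lemma sum_Ico_consec_int (f : ℤ → ℂ) {a b c : ℤ} (hab : a ≤ b) (hbc : b ≤ c) :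
    (∑ j ∈ Finset.Ico a b, f j) + ∑ j ∈ Finset.Ico b c, f j = ∑ j ∈ Finset.Ico a c, f j := by
  rw [← Finset.Ico_union_Ico_eq_Ico hab hbc,
    Finset.sum_union (Finset.Ico_disjoint_Ico_consecutive a b c)]

private lemma sum_block (h : ℤ → ℂ) (c : ℤ) (L : ℕ) :
    ∑ j ∈ Finset.Ico c (c + L), h j = ∑ r ∈ Finset.range L, h (c + r) := by
  induction L with
  | zero => simp
  | succ n ih =>
    rw [Finset.sum_range_succ, ← ih]
    have hc : (c + ((n : ℤ) + 1)) = (c + n) + 1 := by ring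
    have : ((n + 1 : ℕ) : ℤ) = (n : ℤ) + 1 := by push_cast; ring
    rw [this, ← add_assoc] at *
    rw [sum_Ico_succ_top_int h (by omega)]

private lemma sum_blocks_aux (h : ℤ → ℂ) (L : ℕ) (s : ℤ) (a : ℤ) (n : ℕ) :
    ∑ j ∈ Finset.Ico ((L : ℤ) * a - s) ((L : ℤ) * (a + n) - s), h j
      = ∑ q ∈ Finset.Ico a (a + n), ∑ r ∈ Finset.range L, h ((L : ℤ) * q + r - s) := by
  induction n with
  | zero => simp
  | succ n ih =>
    have hL0 : (0 : ℤ) ≤ L := by positivity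
    have h1 : (L : ℤ) * a - s ≤ (L : ℤ) * (a + n) - s := by
      have := mul_le_mul_of_nonneg_left (by omega : a ≤ a + (n:ℤ)) hL0
      omega
    have hcast : (a + ((n+1 : ℕ) : ℤ)) = (a + n) + 1 := by push_cast; ring
    have h2 : (L : ℤ) * (a + n) - s ≤ (L : ℤ) * ((a + n) + 1) - s := by nlinarith
    rw [hcast, ← sum_Ico_consec_int h h1 h2, ih,
      sum_Ico_succ_top_int _ (by omega : a ≤ a + (n:ℤ))]
    congr 1
    have he : (L : ℤ) * ((a + n) + 1) - s = ((L : ℤ) * (a + n) - s) + L := by ring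
    rw [he, sum_block]
    exact Finset.sum_congr rfl fun r _ => by congr 1; ring

private lemma sum_blocks_s11 (h : ℤ → ℂ) (L : ℕ) (s : ℤ) (a b : ℤ) (hab : a ≤ b) :
    ∑ j ∈ Finset.Ico ((L : ℤ) * a - s) ((L : ℤ) * b - s), h j
      = ∑ q ∈ Finset.Ico a b, ∑ r ∈ Finset.range L, h ((L : ℤ) * q + r - s) := by
  have hb : b = a + ((b - a).toNat : ℤ) := by omega
  rw [hb]
  exact sum_blocks_aux h L s a _

private lemma Icc_eq_Ico_int (a b : ℤ) : Finset.Icc a b = Finset.Ico a (b + 1) := by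
  ext j
  simp only [Finset.mem_Icc, Finset.mem_Ico]
  omega

set_option maxHeartbeats 1600000 in
/-- For a pseudo-fixed point `w` of a constant-length-`L`
substitution on a compact Hausdorff abelian group whose columns at positions
`k ∈ C` are the coincidences `θ ↦ β_k` (with `p = |C|`) and whose other
columns are the translations `θ ↦ θβ_k`, weighted by a unitary character `χ`:
if `η(m)` exists then `η(Lm)` exists and
`η(Lm) = p/L + ((L−p)/L)·η(m)`. -/
theorem coincidence_recurrence {A : Type*} [TopologicalSpace A]
    [CompactSpace A] [T2Space A] [CommGroup A] [IsTopologicalGroup A]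
    (L : ℕ) (hL : 2 ≤ L) (β : Fin L → A) (s : ℕ) (hs : s ≤ L - 1)
    (C : Finset (Fin L))
    (w : ℤ → A)
    (hwC : ∀ (m : ℤ) (k : Fin L), k ∈ C →
      w ((L : ℤ) * m + (k : ℤ) - (s : ℤ)) = β k)
    (hwT : ∀ (m : ℤ) (k : Fin L), k ∉ C →
      w ((L : ℤ) * m + (k : ℤ) - (s : ℤ)) = w m * β k)
    (χ : A →* ℂ) (hχcont : Continuous χ)
    (hχunit : ∀ a : A, ‖χ a‖ = 1)
    (m : ℤ) (z : ℂ) (hz : AutoCorr χ w m z) :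
    AutoCorr χ w ((L : ℤ) * m)
      ((C.card : ℂ) / L + (((L : ℂ) - C.card) / L) * z) := by
  classical
  unfold AutoCorr at hz ⊢
  have hL0 : (0 : ℤ) < (L : ℤ) := by exact_mod_cast (by omega : 0 < L)
  have hLne : (L : ℤ) ≠ 0 := ne_of_gt hL0
  have hLCne : (L : ℂ) ≠ 0 := by exact_mod_cast (by omega : L ≠ 0)
  set g : ℤ → ℂ := fun j => χ (w j) * (starRingEnd ℂ) (χ (w (j + m))) with hgdef
  set f : ℤ → ℂ := fun j => χ (w j) * (starRingEnd ℂ) (χ (w (j + (L : ℤ) * m))) with hfdef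
  have hχn : ∀ a : A, ‖χ a‖ = 1 := fun a => by
    exact hχunit a
  have hgn : ∀ j, ‖g j‖ ≤ 1 := fun j => by
    simp [hgdef, norm_mul, hχn]
  have hfn : ∀ j, ‖f j‖ ≤ 1 := fun j => by
    simp [hfdef, norm_mul, hχn]
  have hβ1 : ∀ k : Fin L, χ (β k) * (starRingEnd ℂ) (χ (β k)) = 1 := fun k => by
    rw [Complex.mul_conj, Complex.normSq_eq_norm_sq, hχunit]
    norm_num
  -- pointwise identity
  have key : ∀ (q : ℤ) (k : Fin L),
      f ((L : ℤ) * q + (k : ℤ) - s) = if k ∈ C then 1 else g q := by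
    intro q k
    have hshift : (L : ℤ) * q + (k : ℤ) - s + (L : ℤ) * m = (L : ℤ) * (q + m) + (k : ℤ) - s := by
      ring
    by_cases hk : k ∈ C
    · rw [if_pos hk]
      simp only [hfdef]
      rw [hshift, hwC q k hk, hwC (q + m) k hk]
      exact hβ1 k
    · rw [if_neg hk]
      simp only [hfdef, hgdef]
      rw [hshift, hwT q k hk, hwT (q + m) k hk]
      simp only [map_mul]
      have : χ (w q) * χ (β k) * ((starRingEnd ℂ) (χ (w (q + m))) * (starRingEnd ℂ) (χ (β k)))
          = (χ (w q) * (starRingEnd ℂ) (χ (w (q + m)))) * (χ (β k) * (starRingEnd ℂ) (χ (β k))) := by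
        ring
      rw [this, hβ1 k, mul_one]
  have hpL : C.card ≤ L := by
    have := Finset.card_le_univ C
    simpa using this
  -- inner sum over one block
  have inner : ∀ q : ℤ, (∑ r ∈ Finset.range L, f ((L : ℤ) * q + (r : ℤ) - s))
      = (C.card : ℂ) + ((L : ℂ) - C.card) * g q := by
    intro q
    have h1 : (∑ r ∈ Finset.range L, f ((L : ℤ) * q + (r : ℤ) - s))
        = ∑ k : Fin L, f ((L : ℤ) * q + ((k : ℕ) : ℤ) - s) :=
      (Fin.sum_univ_eq_sum_range (fun r => f ((L : ℤ) * q + (r : ℤ) - s)) L).symm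
    rw [h1, Finset.sum_congr rfl fun k _ => key q k]
    rw [Finset.sum_ite, Finset.sum_const, Finset.sum_const]
    simp only [Finset.filter_univ_mem, nsmul_eq_mul, mul_one]
    rw [Finset.filter_not, Finset.filter_univ_mem, Finset.card_sdiff_of_subset (Finset.subset_univ C),
      Finset.card_univ, Fintype.card_fin, Nat.cast_sub hpL]
  -- abbreviations
  set aa : ℕ → ℤ := fun N => -(((N : ℤ) - s) / L) with haa
  set bb : ℕ → ℤ := fun N => ((N : ℤ) + s + 1) / L with hbb
  set S : ℕ → ℂ := fun N => ∑ j ∈ Finset.Icc (-(N : ℤ)) (N : ℤ), f j with hSdef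
  set TT : ℕ → ℂ := fun K => ∑ j ∈ Finset.Icc (-(K : ℤ)) (K : ℤ), g j with hTTdef
  set GG : ℕ → ℂ := fun N => ∑ q ∈ Finset.Ico (aa N) (bb N), g q with hGGdef
  have hA : ∀ N : ℕ, (2 * (N : ℂ) + 1) ≠ 0 := by
    intro N
    have h1 : ((2 * N + 1 : ℕ) : ℂ) ≠ 0 := Nat.cast_ne_zero.2 (by omega)
    convert h1 using 1
    push_cast; ring
  have hAnorm : ∀ N : ℕ, ‖(2 * (N : ℂ) + 1)‖ = 2 * (N : ℝ) + 1 := by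
    intro N
    have h1 : (2 * (N : ℂ) + 1) = (((2 * (N : ℝ) + 1) : ℝ) : ℂ) := by push_cast; ring
    rw [h1, Complex.norm_real]
    rw [Real.norm_eq_abs, abs_of_pos (by positivity)]
  -- claim 1
  have claim1 : ∀ N : ℕ, s ≤ N →
      ‖S N - ((C.card : ℂ) * (((bb N - aa N : ℤ)) : ℂ) + ((L : ℂ) - C.card) * GG N)‖
        ≤ 2 * (L : ℝ) := by
    intro N hN
    have hsN : (s : ℤ) ≤ (N : ℤ) := by exact_mod_cast hN
    have haaN : aa N = -(((N : ℤ) - s) / L) := by simp only [haa]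
    have hbbN : bb N = ((N : ℤ) + s + 1) / L := by simp only [hbb]
    have hdm1 := Int.mul_ediv_add_emod ((N : ℤ) - s) L
    have hr1a : 0 ≤ ((N : ℤ) - s) % L := Int.emod_nonneg _ hLne
    have hr1b : ((N : ℤ) - s) % L < L := Int.emod_lt_of_pos _ hL0
    have hdm3 := Int.mul_ediv_add_emod ((N : ℤ) + s + 1) L
    have hr3a : 0 ≤ ((N : ℤ) + s + 1) % L := Int.emod_nonneg _ hLne
    have hr3b : ((N : ℤ) + s + 1) % L < L := Int.emod_lt_of_pos _ hL0
    have hd1nn : 0 ≤ ((N : ℤ) - s) / L := Int.ediv_nonneg (by omega) hL0.le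
    have hd3nn : 0 ≤ ((N : ℤ) + s + 1) / L := Int.ediv_nonneg (by omega) hL0.le
    have hAa : (L : ℤ) * aa N = -((N : ℤ) - s) + ((N : ℤ) - s) % L := by
      rw [haaN, mul_neg]; linarith
    have hBb : (L : ℤ) * bb N = ((N : ℤ) + s + 1) - ((N : ℤ) + s + 1) % L := by
      rw [hbbN]; linarith
    have hab : aa N ≤ bb N := by rw [haaN, hbbN]; linarith
    have e1 : -(N : ℤ) ≤ (L : ℤ) * aa N - s := by linarith
    have e2 : (L : ℤ) * aa N - s ≤ (L : ℤ) * bb N - s := by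
      have := mul_le_mul_of_nonneg_left hab hL0.le
      linarith
    have e3 : (L : ℤ) * bb N - s ≤ (N : ℤ) + 1 := by linarith
    have hsplit : S N = (∑ j ∈ Finset.Ico (-(N : ℤ)) ((L : ℤ) * aa N - s), f j)
        + (∑ j ∈ Finset.Ico ((L : ℤ) * aa N - s) ((L : ℤ) * bb N - s), f j)
        + (∑ j ∈ Finset.Ico ((L : ℤ) * bb N - s) ((N : ℤ) + 1), f j) := by
      simp only [hSdef]
      rw [Icc_eq_Ico_int, ← sum_Ico_consec_int f e1 (e2.trans e3),
        ← sum_Ico_consec_int f e2 e3]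
      ring
    have hcard : (((Finset.Ico (aa N) (bb N)).card : ℕ) : ℂ) = (((bb N - aa N : ℤ)) : ℂ) := by
      rw [Int.card_Ico]
      exact_mod_cast Int.toNat_of_nonneg (sub_nonneg.2 hab)
    have hmid : (∑ j ∈ Finset.Ico ((L : ℤ) * aa N - s) ((L : ℤ) * bb N - s), f j)
        = (C.card : ℂ) * (((bb N - aa N : ℤ)) : ℂ) + ((L : ℂ) - C.card) * GG N := by
      rw [sum_blocks_s11 f L s (aa N) (bb N) hab,
        Finset.sum_congr rfl fun q _ => inner q,
        Finset.sum_add_distrib, Finset.sum_const, ← Finset.mul_sum, nsmul_eq_mul, hcard]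
      simp only [hGGdef]
      ring
    have hedge1 : ‖∑ j ∈ Finset.Ico (-(N : ℤ)) ((L : ℤ) * aa N - s), f j‖ ≤ (L : ℝ) := by
      refine le_trans (norm_sum_le_card f hfn _) ?_
      rw [Int.card_Ico]
      have hv : (L : ℤ) * aa N - s - -(N : ℤ) = ((N : ℤ) - s) % L := by linarith
      rw [hv]
      exact_mod_cast Int.toNat_le.2 hr1b.le
    have hedge3 : ‖∑ j ∈ Finset.Ico ((L : ℤ) * bb N - s) ((N : ℤ) + 1), f j‖ ≤ (L : ℝ) := by
      refine le_trans (norm_sum_le_card f hfn _) ?_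
      rw [Int.card_Ico]
      have hv : (N : ℤ) + 1 - ((L : ℤ) * bb N - s) = ((N : ℤ) + s + 1) % L := by linarith
      rw [hv]
      exact_mod_cast Int.toNat_le.2 hr3b.le
    have hdiff : S N - ((C.card : ℂ) * (((bb N - aa N : ℤ)) : ℂ) + ((L : ℂ) - C.card) * GG N)
        = (∑ j ∈ Finset.Ico (-(N : ℤ)) ((L : ℤ) * aa N - s), f j)
          + (∑ j ∈ Finset.Ico ((L : ℤ) * bb N - s) ((N : ℤ) + 1), f j) := by
      rw [hsplit, ← hmid]; ring
    rw [hdiff]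
    refine le_trans (norm_add_le _ _) ?_
    have := add_le_add hedge1 hedge3
    linarith
  -- claim 2
  have claim2 : ∀ N : ℕ, s ≤ N →
      ‖GG N - TT (N / L)‖ ≤ 2 * (s : ℝ) + 1 := by
    intro N _
    have hKdef : ((N / L : ℕ) : ℤ) = (N : ℤ) / L := Int.natCast_div N L
    have hd12 : ((N : ℤ) - s) / L ≤ (N : ℤ) / L := Int.ediv_le_ediv hL0 (by omega)
    have hL1 : (1 : ℤ) ≤ (L : ℤ) := by exact_mod_cast (by omega : 1 ≤ L)
    have hsL : (s : ℤ) ≤ (s : ℤ) * L := le_mul_of_one_le_right (by positivity) hL1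
    have hd21 : (N : ℤ) / L ≤ ((N : ℤ) - s) / L + s := by
      have h1 : (N : ℤ) ≤ ((N : ℤ) - s) + (s : ℤ) * L := by linarith
      have h2 := Int.ediv_le_ediv hL0 h1
      rwa [Int.add_mul_ediv_right _ _ hLne] at h2
    have hd23 : (N : ℤ) / L ≤ ((N : ℤ) + s + 1) / L := Int.ediv_le_ediv hL0 (by omega)
    have hs1L : (s : ℤ) + 1 ≤ ((s : ℤ) + 1) * L := le_mul_of_one_le_right (by positivity) hL1
    have hd32 : ((N : ℤ) + s + 1) / L ≤ (N : ℤ) / L + (s + 1) := by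
      have h1 : (N : ℤ) + s + 1 ≤ (N : ℤ) + ((s : ℤ) + 1) * L := by linarith
      have h2 := Int.ediv_le_ediv hL0 h1
      rwa [Int.add_mul_ediv_right _ _ hLne] at h2
    have haaN : aa N = -(((N : ℤ) - s) / L) := by simp only [haa]
    have hbbN : bb N = ((N : ℤ) + s + 1) / L := by simp only [hbb]
    set K : ℤ := ((N / L : ℕ) : ℤ) with hK
    have hTTeq : TT (N / L) = ∑ j ∈ Finset.Ico (-K) (K + 1), g j := by
      simp only [hTTdef]
      rw [Icc_eq_Ico_int]
    have t1 := norm_sum_Ico_left hgn (aa N) (-K) (bb N)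
    have t2 := norm_sum_Ico_right hgn (-K) (bb N) (K + 1)
    have hb1 : ((aa N - -K).natAbs : ℝ) ≤ (s : ℝ) := by
      have h0 : (0 : ℤ) ≤ aa N - -K := by rw [haaN, hKdef]; linarith
      have h1 : aa N - -K ≤ (s : ℤ) := by rw [haaN, hKdef]; linarith
      rw [Nat.cast_natAbs, Int.cast_abs, abs_of_nonneg (by exact_mod_cast h0)]
      exact_mod_cast h1
    have hb2 : ((bb N - (K + 1)).natAbs : ℝ) ≤ (s : ℝ) + 1 := by
      have h0 : -((s : ℤ) + 1) ≤ bb N - (K + 1) := by rw [hbbN, hKdef]; linarith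
      have h1 : bb N - (K + 1) ≤ (s : ℤ) + 1 := by rw [hbbN, hKdef]; linarith
      rw [Nat.cast_natAbs, Int.cast_abs, abs_le]
      constructor
      · exact_mod_cast h0
      · exact_mod_cast h1
    have hsum : GG N - TT (N / L)
        = ((∑ q ∈ Finset.Ico (aa N) (bb N), g q) - ∑ q ∈ Finset.Ico (-K) (bb N), g q)
          + ((∑ q ∈ Finset.Ico (-K) (bb N), g q) - ∑ q ∈ Finset.Ico (-K) (K + 1), g q) := by
      rw [hTTeq]
      simp only [hGGdef]
      ring
    rw [hsum]
    refine le_trans (norm_add_le _ _) ?_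
    have := add_le_add (le_trans t1 hb1) (le_trans t2 hb2)
    linarith
  -- sequences
  set e : ℕ → ℂ := fun N =>
    (S N - ((C.card : ℂ) * (((bb N - aa N : ℤ)) : ℂ) + ((L : ℂ) - C.card) * TT (N / L)))
      / (2 * (N : ℂ) + 1) with hedef
  set dd : ℕ → ℂ := fun N => (((bb N - aa N : ℤ)) : ℂ) / (2 * (N : ℂ) + 1) with hdddef
  set tt : ℕ → ℂ := fun N => TT (N / L) / (2 * ((N / L : ℕ) : ℂ) + 1) with httdef
  set qq : ℕ → ℂ := fun N => (2 * ((N / L : ℕ) : ℂ) + 1) / (2 * (N : ℂ) + 1) with hqqdef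
  have hinv : Filter.Tendsto (fun N : ℕ => (2 * (N : ℝ) + 1)⁻¹) Filter.atTop (nhds 0) := by
    have h1 : Filter.Tendsto (fun N : ℕ => 2 * (N : ℝ) + 1) Filter.atTop Filter.atTop := by
      apply Filter.tendsto_atTop_add_const_right
      exact Filter.Tendsto.const_mul_atTop two_pos tendsto_natCast_atTop_atTop
    exact h1.inv_tendsto_atTop
  have he : Filter.Tendsto e Filter.atTop (nhds 0) := by
    have hc2 : ‖(L : ℂ) - (C.card : ℂ)‖ ≤ (L : ℝ) := by
      have h1 : ((L : ℂ) - (C.card : ℂ)) = ((L - C.card : ℕ) : ℂ) := by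
        rw [Nat.cast_sub hpL]
      rw [h1, Complex.norm_natCast]
      exact_mod_cast Nat.sub_le L C.card
    have hbound : ∀ᶠ N in Filter.atTop,
        ‖e N‖ ≤ (2 * (L : ℝ) + (L : ℝ) * (2 * (s : ℝ) + 1)) * (2 * (N : ℝ) + 1)⁻¹ := by
      filter_upwards [Filter.eventually_ge_atTop s] with N hN
      have h1 : S N - ((C.card : ℂ) * (((bb N - aa N : ℤ)) : ℂ) + ((L : ℂ) - C.card) * TT (N / L))
          = (S N - ((C.card : ℂ) * (((bb N - aa N : ℤ)) : ℂ) + ((L : ℂ) - C.card) * GG N))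
            + ((L : ℂ) - C.card) * (GG N - TT (N / L)) := by ring
      have h4 : ‖((L : ℂ) - (C.card : ℂ)) * (GG N - TT (N / L))‖ ≤ (L : ℝ) * (2 * (s : ℝ) + 1) := by
        rw [norm_mul]
        exact mul_le_mul hc2 (claim2 N hN) (norm_nonneg _) (by positivity)
      have h2 : ‖S N - ((C.card : ℂ) * (((bb N - aa N : ℤ)) : ℂ)
            + ((L : ℂ) - C.card) * TT (N / L))‖
          ≤ 2 * (L : ℝ) + (L : ℝ) * (2 * (s : ℝ) + 1) := by
        rw [h1]
        refine le_trans (norm_add_le _ _) ?_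
        have h3 := claim1 N hN
        linarith
      simp only [hedef]
      rw [norm_div, hAnorm, div_eq_mul_inv]
      exact mul_le_mul_of_nonneg_right h2 (by positivity)
    have hglim : Filter.Tendsto
        (fun N : ℕ => (2 * (L : ℝ) + (L : ℝ) * (2 * (s : ℝ) + 1)) * (2 * (N : ℝ) + 1)⁻¹)
        Filter.atTop (nhds 0) := by
      simpa using hinv.const_mul (2 * (L : ℝ) + (L : ℝ) * (2 * (s : ℝ) + 1))
    exact squeeze_zero_norm' hbound hglim
  have hL1R : (1 : ℝ) ≤ (L : ℝ) := by exact_mod_cast (by omega : 1 ≤ L)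
  have hdd : Filter.Tendsto dd Filter.atTop (nhds (1 / (L : ℂ))) := by
    have hident : ∀ N : ℕ, dd N - 1 / (L : ℂ)
        = ((((L : ℤ) * (bb N - aa N) - (2 * (N : ℤ) + 1)) : ℤ) : ℂ)
            / ((L : ℂ) * (2 * (N : ℂ) + 1)) := by
      intro N
      have hA' := hA N
      simp only [hdddef]
      field_simp
      push_cast
      ring
    have hknorm : ∀ N : ℕ,
        ‖((((L : ℤ) * (bb N - aa N) - (2 * (N : ℤ) + 1)) : ℤ) : ℂ)‖ ≤ 2 * (L : ℝ) := by
      intro N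
      have haaN : aa N = -(((N : ℤ) - s) / L) := by simp only [haa]
      have hbbN : bb N = ((N : ℤ) + s + 1) / L := by simp only [hbb]
      have hdm1 := Int.mul_ediv_add_emod ((N : ℤ) - s) L
      have hr1a : 0 ≤ ((N : ℤ) - s) % L := Int.emod_nonneg _ hLne
      have hr1b : ((N : ℤ) - s) % L < L := Int.emod_lt_of_pos _ hL0
      have hdm3 := Int.mul_ediv_add_emod ((N : ℤ) + s + 1) L
      have hr3a : 0 ≤ ((N : ℤ) + s + 1) % L := Int.emod_nonneg _ hLne
      have hr3b : ((N : ℤ) + s + 1) % L < L := Int.emod_lt_of_pos _ hL0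
      have hAa : (L : ℤ) * aa N = -((N : ℤ) - s) + ((N : ℤ) - s) % L := by
        rw [haaN, mul_neg]; linarith
      have hBb : (L : ℤ) * bb N = ((N : ℤ) + s + 1) - ((N : ℤ) + s + 1) % L := by
        rw [hbbN]; linarith
      have hexp : (L : ℤ) * (bb N - aa N) = (L : ℤ) * bb N - (L : ℤ) * aa N := by ring
      have hlow : -(2 * (L : ℤ)) ≤ (L : ℤ) * (bb N - aa N) - (2 * (N : ℤ) + 1) := by linarith
      have hup : (L : ℤ) * (bb N - aa N) - (2 * (N : ℤ) + 1) ≤ 2 * (L : ℤ) := by linarith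
      rw [Complex.norm_intCast, abs_le]
      constructor
      · exact_mod_cast hlow
      · exact_mod_cast hup
    have hzero : Filter.Tendsto (fun N => dd N - 1 / (L : ℂ)) Filter.atTop (nhds 0) := by
      refine squeeze_zero_norm (fun N => ?_)
        (by simpa using hinv.const_mul (2 * (L : ℝ)))
      rw [hident N, norm_div]
      have hden : ‖(L : ℂ) * (2 * (N : ℂ) + 1)‖ = (L : ℝ) * (2 * (N : ℝ) + 1) := by
        rw [norm_mul, hAnorm, Complex.norm_natCast]
      rw [hden, ← div_eq_mul_inv (2 * (L : ℝ))]
      exact div_le_div₀ (by positivity) (hknorm N) (by positivity)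
        (le_mul_of_one_le_left (by positivity) hL1R)
    have := hzero.add_const (1 / (L : ℂ))
    simpa using this
  have hqq : Filter.Tendsto qq Filter.atTop (nhds (1 / (L : ℂ))) := by
    have hident : ∀ N : ℕ, qq N - 1 / (L : ℂ)
        = ((((L : ℤ) * (2 * ((N / L : ℕ) : ℤ) + 1) - (2 * (N : ℤ) + 1)) : ℤ) : ℂ)
            / ((L : ℂ) * (2 * (N : ℂ) + 1)) := by
      intro N
      have hA' := hA N
      simp only [hqqdef]
      set M : ℕ := N / L with hM
      field_simp
      push_cast
      ring
    have hknorm : ∀ N : ℕ,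
        ‖((((L : ℤ) * (2 * ((N / L : ℕ) : ℤ) + 1) - (2 * (N : ℤ) + 1)) : ℤ) : ℂ)‖
          ≤ 3 * (L : ℝ) := by
      intro N
      have h := Nat.div_add_mod N L
      have h2 : ((L : ℤ) * ((N / L : ℕ) : ℤ) + ((N % L : ℕ) : ℤ) = (N : ℤ)) := by exact_mod_cast h
      have hmlt : ((N % L : ℕ) : ℤ) < L := by exact_mod_cast Nat.mod_lt N (by omega : 0 < L)
      have hm0 : (0 : ℤ) ≤ ((N % L : ℕ) : ℤ) := by positivity
      have hexp : (L : ℤ) * (2 * ((N / L : ℕ) : ℤ) + 1)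
          = 2 * ((L : ℤ) * ((N / L : ℕ) : ℤ)) + L := by ring
      have hL1 : (1 : ℤ) ≤ (L : ℤ) := by exact_mod_cast (by omega : 1 ≤ L)
      have hlow : -(3 * (L : ℤ)) ≤ (L : ℤ) * (2 * ((N / L : ℕ) : ℤ) + 1) - (2 * (N : ℤ) + 1) := by
        linarith
      have hup : (L : ℤ) * (2 * ((N / L : ℕ) : ℤ) + 1) - (2 * (N : ℤ) + 1) ≤ 3 * (L : ℤ) := by
        linarith
      rw [Complex.norm_intCast, abs_le]
      constructor
      · exact_mod_cast hlow
      · exact_mod_cast hup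
    have hzero : Filter.Tendsto (fun N => qq N - 1 / (L : ℂ)) Filter.atTop (nhds 0) := by
      refine squeeze_zero_norm (fun N => ?_)
        (by simpa using hinv.const_mul (3 * (L : ℝ)))
      rw [hident N, norm_div]
      have hden : ‖(L : ℂ) * (2 * (N : ℂ) + 1)‖ = (L : ℝ) * (2 * (N : ℝ) + 1) := by
        rw [norm_mul, hAnorm, Complex.norm_natCast]
      rw [hden, ← div_eq_mul_inv (3 * (L : ℝ))]
      exact div_le_div₀ (by positivity) (hknorm N) (by positivity)
        (le_mul_of_one_le_left (by positivity) hL1R)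
    have := hzero.add_const (1 / (L : ℂ))
    simpa using this
  have htt : Filter.Tendsto tt Filter.atTop (nhds z) := by
    have hdivtop : Filter.Tendsto (fun N : ℕ => N / L) Filter.atTop Filter.atTop := by
      apply Filter.tendsto_atTop_atTop.2
      intro b
      exact ⟨b * L, fun n hn => (Nat.le_div_iff_mul_le (by omega)).2 hn⟩
    exact hz.comp hdivtop
  have hcomb : Filter.Tendsto
      (fun N => e N + (C.card : ℂ) * dd N + ((L : ℂ) - C.card) * (tt N * qq N))
      Filter.atTop
      (nhds (0 + (C.card : ℂ) * (1 / L) + ((L : ℂ) - C.card) * (z * (1 / L)))) :=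
    (he.add (hdd.const_mul _)).add ((htt.mul hqq).const_mul _)
  have hval : (C.card : ℂ) / L + (((L : ℂ) - C.card) / L) * z
      = 0 + (C.card : ℂ) * (1 / L) + ((L : ℂ) - C.card) * (z * (1 / L)) := by ring
  rw [hval]
  refine hcomb.congr fun N => ?_
  show _ = S N / (2 * (N : ℂ) + 1)
  have hB : (2 * ((N / L : ℕ) : ℂ) + 1) ≠ 0 := hA (N / L)
  simp only [hedef, hdddef, httdef, hqqdef]
  field_simp
  ring
end

section
/- Let φ ∈ ℝ, α = e^{2πiφ}, and let w : ℕ → ℂ be the unique sequence satisfying w_0 = 1 and, for all m ≥ 0, w_{4m} = w_m (for m ≥ 1), w_{4m+1} = w_m, w_{4m+2} = α·w_m, w_{4m+3} = w_m. Then for every n ∈ ℤ the limit lim_{N→∞} (1/N) Σ_{j=0}^{N−1} w_j^n · conj(w_{j+1}^n) exists and equals 1/3 + (2/3)·cos(2πnφ). -/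
open Filter

/-- Let `α = e^{2πiφ}` and let `w : ℕ → ℂ` be the (unique)
sequence with `w 0 = 1`, `w (4m) = w m` (for `m ≥ 1`), `w (4m+1) = w m`,
`w (4m+2) = α·w m` and `w (4m+3) = w m`.  Then for every `n ∈ ℤ` the
autocorrelation coefficient
`lim_{N→∞} (1/N) Σ_{j=0}^{N−1} w_j^n · conj(w_{j+1}^n)` exists and equals
`1/3 + (2/3)·cos(2πnφ)`. -/
theorem bijective_circle_autocorrelation (φ : ℝ) (α : ℂ)
    (hα : α = Complex.exp (2 * Real.pi * Complex.I * φ))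
    (w : ℕ → ℂ) (h0 : w 0 = 1)
    (h4 : ∀ m : ℕ, 1 ≤ m → w (4 * m) = w m)
    (h41 : ∀ m : ℕ, w (4 * m + 1) = w m)
    (h42 : ∀ m : ℕ, w (4 * m + 2) = α * w m)
    (h43 : ∀ m : ℕ, w (4 * m + 3) = w m) :
    ∀ n : ℤ,
      Tendsto (fun N : ℕ =>
          (∑ j ∈ Finset.range N, (w j) ^ n * (starRingEnd ℂ) ((w (j + 1)) ^ n))
            / (N : ℂ))
        atTop
        (nhds ((1 : ℂ) / 3 + (2 / 3) * Real.cos (2 * Real.pi * (n : ℝ) * φ))) := by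
  intro n
  -- norm of α is 1
  have hαnorm : ‖α‖ = 1 := by
    rw [hα, Complex.norm_exp]
    have : (2 * (Real.pi : ℂ) * Complex.I * (φ : ℂ)).re = 0 := by
      simp [Complex.mul_re, Complex.mul_im]
    rw [this, Real.exp_zero]
  -- norm of w j is 1 for all j
  have hwnorm : ∀ j, ‖w j‖ = 1 := by
    intro j
    induction j using Nat.strong_induction_on with
    | _ j ih =>
      rcases Nat.eq_zero_or_pos j with h | h
      · simp [h, h0]
      · have hdlt : j / 4 < j := Nat.div_lt_self h (by norm_num)
        have hcases : j % 4 = 0 ∨ j % 4 = 1 ∨ j % 4 = 2 ∨ j % 4 = 3 := by omega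
        rcases hcases with h' | h' | h' | h'
        · have hj : j = 4 * (j / 4) := by omega
          have hm1 : 1 ≤ j / 4 := by omega
          rw [hj, h4 _ hm1]; exact ih _ hdlt
        · have hj : j = 4 * (j / 4) + 1 := by omega
          rw [hj, h41]; exact ih _ hdlt
        · have hj : j = 4 * (j / 4) + 2 := by omega
          rw [hj, h42, norm_mul, hαnorm, one_mul]; exact ih _ hdlt
        · have hj : j = 4 * (j / 4) + 3 := by omega
          rw [hj, h43]; exact ih _ hdlt
  set β : ℂ := α ^ n with hβ
  set f : ℕ → ℂ := fun j => w j ^ n * (starRingEnd ℂ) (w (j + 1) ^ n) with hfdef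
  set c : ℂ := 1 + β + (starRingEnd ℂ) β with hc
  have hvnorm : ∀ j, ‖w j ^ n‖ = 1 := by
    intro j; rw [norm_zpow, hwnorm, one_zpow]
  have hvmul : ∀ j, w j ^ n * (starRingEnd ℂ) (w j ^ n) = 1 := by
    intro j
    rw [Complex.mul_conj, ← Complex.sq_norm, hvnorm]
    norm_num
  have hβnorm : ‖β‖ = 1 := by rw [hβ, norm_zpow, hαnorm, one_zpow]
  -- the value of w (4m) ^ n
  have hv4 : ∀ m : ℕ, w (4 * m) ^ n = w m ^ n := by
    intro m
    rcases Nat.eq_zero_or_pos m with h | h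
    · rw [h]
    · rw [h4 m h]
  -- values of f
  have hf0 : ∀ m : ℕ, f (4 * m) = 1 := by
    intro m
    show w (4 * m) ^ n * (starRingEnd ℂ) (w (4 * m + 1) ^ n) = 1
    rw [h41, hv4]; exact hvmul m
  have hf1 : ∀ m : ℕ, f (4 * m + 1) = (starRingEnd ℂ) β := by
    intro m
    show w (4 * m + 1) ^ n * (starRingEnd ℂ) (w (4 * m + 1 + 1) ^ n) = (starRingEnd ℂ) β
    rw [show 4 * m + 1 + 1 = 4 * m + 2 by ring, h41, h42, mul_zpow, map_mul, hβ]
    linear_combination (starRingEnd ℂ) (α ^ n) * hvmul m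
  have hf2 : ∀ m : ℕ, f (4 * m + 2) = β := by
    intro m
    show w (4 * m + 2) ^ n * (starRingEnd ℂ) (w (4 * m + 2 + 1) ^ n) = β
    rw [show 4 * m + 2 + 1 = 4 * m + 3 by ring, h42, h43, mul_zpow, hβ]
    linear_combination (α ^ n) * hvmul m
  have hf3 : ∀ m : ℕ, f (4 * m + 3) = f m := by
    intro m
    show w (4 * m + 3) ^ n * (starRingEnd ℂ) (w (4 * m + 3 + 1) ^ n)
        = w m ^ n * (starRingEnd ℂ) (w (m + 1) ^ n)
    rw [show 4 * m + 3 + 1 = 4 * (m + 1) by ring, h43, hv4]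
  have hfnorm : ∀ j, ‖f j‖ = 1 := by
    intro j
    show ‖w j ^ n * (starRingEnd ℂ) (w (j + 1) ^ n)‖ = 1
    rw [norm_mul, RCLike.norm_conj, hvnorm, hvnorm, one_mul]
  have hcnorm : ‖c‖ ≤ 3 := by
    calc ‖c‖ ≤ ‖(1 : ℂ) + β‖ + ‖(starRingEnd ℂ) β‖ := norm_add_le _ _
      _ ≤ (‖(1 : ℂ)‖ + ‖β‖) + ‖(starRingEnd ℂ) β‖ := by
          gcongr; exact norm_add_le _ _
      _ = 3 := by rw [RCLike.norm_conj, hβnorm]; norm_num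
  -- the renormalization identity for partial sums
  have hS4 : ∀ N : ℕ, (∑ j ∈ Finset.range (4 * N), f j)
      = c * N + ∑ j ∈ Finset.range N, f j := by
    intro N
    induction N with
    | zero => simp
    | succ N ih =>
      rw [show 4 * (N + 1) = 4 * N + 1 + 1 + 1 + 1 by ring,
        Finset.sum_range_succ, Finset.sum_range_succ, Finset.sum_range_succ,
        Finset.sum_range_succ, ih,
        show 4 * N + 1 + 1 = 4 * N + 2 by ring,
        show 4 * N + 1 + 1 + 1 = 4 * N + 3 by ring,
        hf0, hf1, hf2, hf3, Finset.sum_range_succ, hc]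
      push_cast
      ring
  -- bound on partial sums
  have hSnorm : ∀ N : ℕ, ‖∑ j ∈ Finset.range N, f j‖ ≤ N := by
    intro N
    calc ‖∑ j ∈ Finset.range N, f j‖ ≤ ∑ j ∈ Finset.range N, ‖f j‖ :=
          norm_sum_le _ _
      _ = N := by simp [hfnorm]
  -- key estimate
  have key : ∀ N : ℕ, ‖(∑ j ∈ Finset.range N, f j) - c / 3 * N‖
      ≤ 2 * Real.sqrt N + 70 := by
    intro N
    induction N using Nat.strong_induction_on with
    | _ N ih =>
      by_cases hN : N < 36
      · have h1 : ‖(∑ j ∈ Finset.range N, f j) - c / 3 * N‖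
            ≤ ‖∑ j ∈ Finset.range N, f j‖ + ‖c / 3 * (N : ℂ)‖ := norm_sub_le _ _
        have h2 : ‖c / 3 * (N : ℂ)‖ ≤ 1 * N := by
          have h3' : ‖(3:ℂ)‖ = (3:ℝ) := by simp
          have hNn : ‖(N : ℂ)‖ = (N : ℝ) := by simp
          rw [norm_mul, norm_div, h3', hNn]
          have hle : ‖c‖ / 3 ≤ 1 := by linarith
          exact mul_le_mul_of_nonneg_right hle (Nat.cast_nonneg N)
        have h3 : (0:ℝ) ≤ Real.sqrt N := Real.sqrt_nonneg _
        have h4' : (N : ℝ) ≤ 35 := by exact_mod_cast Nat.lt_succ_iff.mp hN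
        calc ‖(∑ j ∈ Finset.range N, f j) - c / 3 * N‖
            ≤ ‖∑ j ∈ Finset.range N, f j‖ + ‖c / 3 * (N : ℂ)‖ := h1
          _ ≤ (N : ℝ) + 1 * N := add_le_add (hSnorm N) h2
          _ ≤ 2 * Real.sqrt N + 70 := by linarith
      · push_neg at hN
        set M := N / 4 with hM
        have hMlt : M < N := Nat.div_lt_self (by omega) (by norm_num)
        have h4M : 4 * M ≤ N := by omega
        have hrle : N - 4 * M ≤ 3 := by omega
        -- split the sum
        have hsplit : (∑ j ∈ Finset.range N, f j)
            = (∑ j ∈ Finset.range (4 * M), f j) + ∑ j ∈ Finset.Ico (4 * M) N, f j := by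
          simp only [Finset.range_eq_Ico]
          exact (Finset.sum_Ico_consecutive _ (Nat.zero_le _) h4M).symm
        have hNcast : (N : ℂ) = 4 * M + ((N - 4 * M : ℕ) : ℂ) := by
          push_cast [Nat.cast_sub h4M]
          ring
        have hTnorm : ‖∑ j ∈ Finset.Ico (4 * M) N, f j‖ ≤ 3 := by
          calc ‖∑ j ∈ Finset.Ico (4 * M) N, f j‖
              ≤ ∑ j ∈ Finset.Ico (4 * M) N, ‖f j‖ := norm_sum_le _ _
            _ = ((N - 4 * M : ℕ) : ℝ) := by
                simp [hfnorm, Nat.card_Ico]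
            _ ≤ 3 := by exact_mod_cast hrle
        have hrnorm : ‖c / 3 * ((N - 4 * M : ℕ) : ℂ)‖ ≤ 3 := by
          rw [norm_mul, norm_div]
          have h1 : ‖((N - 4 * M : ℕ) : ℂ)‖ = ((N - 4 * M : ℕ) : ℝ) := by simp
          rw [h1, show ‖(3:ℂ)‖ = 3 by norm_num]
          have h2 : ((N - 4 * M : ℕ) : ℝ) ≤ 3 := by exact_mod_cast hrle
          have h3 : ‖c‖ / 3 ≤ 1 := by linarith
          calc ‖c‖ / 3 * ((N - 4 * M : ℕ) : ℝ) ≤ 1 * 3 := by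
                apply mul_le_mul h3 h2 (by positivity) (by norm_num)
            _ = 3 := by norm_num
        have hEq : (∑ j ∈ Finset.range N, f j) - c / 3 * N
            = ((∑ j ∈ Finset.range M, f j) - c / 3 * M)
              + ((∑ j ∈ Finset.Ico (4 * M) N, f j)
                  - c / 3 * ((N - 4 * M : ℕ) : ℂ)) := by
          rw [hsplit, hS4 M, hNcast]
          ring
        have hIH := ih M hMlt
        have hsq : 2 * Real.sqrt M ≤ Real.sqrt N := by
          have h1 : (2 : ℝ) * Real.sqrt M = Real.sqrt (4 * M) := by
            rw [show (4 : ℝ) * M = (2:ℝ)^2 * M by ring, Real.sqrt_mul (by positivity),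
              Real.sqrt_sq (by norm_num)]
          rw [h1]
          apply Real.sqrt_le_sqrt
          exact_mod_cast h4M
        have hsqN : (6 : ℝ) ≤ Real.sqrt N := by
          have : Real.sqrt 36 ≤ Real.sqrt N := Real.sqrt_le_sqrt (by exact_mod_cast hN)
          rw [show (36:ℝ) = 6^2 by norm_num, Real.sqrt_sq (by norm_num)] at this
          exact this
        calc ‖(∑ j ∈ Finset.range N, f j) - c / 3 * N‖
            ≤ ‖(∑ j ∈ Finset.range M, f j) - c / 3 * M‖
              + ‖(∑ j ∈ Finset.Ico (4 * M) N, f j)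
                  - c / 3 * ((N - 4 * M : ℕ) : ℂ)‖ := by rw [hEq]; exact norm_add_le _ _
          _ ≤ (2 * Real.sqrt M + 70) + (3 + 3) := by
              gcongr
              exact le_trans (norm_sub_le _ _) (by linarith [hTnorm, hrnorm])
          _ ≤ 2 * Real.sqrt N + 70 := by linarith
  -- value of c
  have hcval : c = 1 + 2 * (Real.cos (2 * Real.pi * (n : ℝ) * φ) : ℂ) := by
    have hβval : β = Complex.exp (((2 * Real.pi * (n : ℝ) * φ : ℝ) : ℂ) * Complex.I) := by
      rw [hβ, hα, ← Complex.exp_int_mul]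
      congr 1
      push_cast
      ring
    have hconj : (starRingEnd ℂ) β
        = Complex.exp (-(((2 * Real.pi * (n : ℝ) * φ : ℝ) : ℂ)) * Complex.I) := by
      rw [hβval, ← Complex.exp_conj, map_mul, Complex.conj_I, Complex.conj_ofReal]
      congr 1
      ring
    rw [hc, hconj, hβval, Complex.exp_mul_I, Complex.exp_mul_I]
    rw [Complex.cos_neg, Complex.sin_neg, ← Complex.ofReal_cos]
    ring
  -- the limit value equals c / 3
  have hval : (1 : ℂ) / 3 + (2 / 3) * Real.cos (2 * Real.pi * (n : ℝ) * φ) = c / 3 := by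
    rw [hcval]; ring
  rw [hval]
  -- squeeze
  have hg1 : Tendsto (fun N : ℕ => (Real.sqrt N)⁻¹) atTop (nhds 0) := by
    have h := (tendsto_rpow_neg_atTop (by norm_num : (0:ℝ) < 1/2)).comp
      tendsto_natCast_atTop_atTop
    refine h.congr fun N => ?_
    simp only [Function.comp_apply]
    rw [Real.rpow_neg (Nat.cast_nonneg N), Real.sqrt_eq_rpow]
  have hg2 : Tendsto (fun N : ℕ => (70 : ℝ) / N) atTop (nhds 0) :=
    tendsto_const_div_atTop_nhds_zero_nat 70
  have hg : Tendsto (fun N : ℕ => 2 * (Real.sqrt N)⁻¹ + 70 / N) atTop (nhds 0) := by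
    have := (hg1.const_mul 2).add hg2
    simpa using this
  rw [← tendsto_sub_nhds_zero_iff]
  refine squeeze_zero_norm' ?_ hg
  filter_upwards [eventually_ge_atTop 1] with N hN1
  have hNpos : (0 : ℝ) < N := by exact_mod_cast hN1
  have hNne : (N : ℂ) ≠ 0 := Nat.cast_ne_zero.mpr (by omega)
  have hsqpos : 0 < Real.sqrt N := Real.sqrt_pos.mpr hNpos
  have heq : (∑ j ∈ Finset.range N, f j) / N - c / 3
      = ((∑ j ∈ Finset.range N, f j) - c / 3 * N) / N := by
    field_simp
  rw [heq, norm_div]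
  have hnormN : ‖(N : ℂ)‖ = (N : ℝ) := by simp
  rw [hnormN]
  have hrw : 2 * (Real.sqrt N)⁻¹ + 70 / N = (2 * Real.sqrt N + 70) / N := by
    rw [add_div, mul_div_assoc]
    congr 2
    rw [eq_div_iff (ne_of_gt hNpos), inv_mul_eq_div, div_eq_iff (ne_of_gt hsqpos)]
    exact (Real.mul_self_sqrt hNpos.le).symm
  rw [hrw]
  exact (div_le_div_iff_of_pos_right hNpos).mpr (key N)
end

section
/- Let 𝒜 = ℕ ∪ {∞} be the one-point compactification of ℕ and define ℓ : 𝒜 → ℝ by ℓ(n) = 2 − (1/2)^n for n ∈ ℕ and ℓ(∞) = 2. Then ℓ is continuous on 𝒜, satisfies 1 ≤ ℓ(a) ≤ 2 for all a ∈ 𝒜 (so ℓ is strictly positive and bounded), and ℓ is an eigenfunction of the substitution operator with eigenvalue 5/2: ℓ(0) + ℓ(1) = (5/2)·ℓ(0), ℓ(0) + ℓ(n+1) + ℓ(n−1) = (5/2)·ℓ(n) for every n ≥ 1, and ℓ(0) + ℓ(∞) + ℓ(∞) = (5/2)·ℓ(∞). -/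
open OnePoint

/-- On the one-point compactification `𝒜 = ℕ ∪ {∞}`, the
function `ℓ` with `ℓ(n) = 2 − (1/2)^n` and `ℓ(∞) = 2` is continuous, satisfies
`1 ≤ ℓ ≤ 2`, and is an eigenfunction of the substitution operator of
`ρ(0) = [0][1]`, `ρ(n) = [0][n+1][n−1]`, `ρ(∞) = [0][∞][∞]` with eigenvalue
`5/2`. -/
theorem length_function_eigenfunction (ℓ : OnePoint ℕ → ℝ)
    (hfin : ∀ n : ℕ, ℓ (n : OnePoint ℕ) = 2 - (1 / 2 : ℝ) ^ n)
    (hinf : ℓ (∞ : OnePoint ℕ) = 2) :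
    Continuous ℓ ∧
    (∀ a : OnePoint ℕ, 1 ≤ ℓ a ∧ ℓ a ≤ 2) ∧
    ℓ ((0 : ℕ) : OnePoint ℕ) + ℓ ((1 : ℕ) : OnePoint ℕ)
      = (5 / 2 : ℝ) * ℓ ((0 : ℕ) : OnePoint ℕ) ∧
    (∀ n : ℕ, 1 ≤ n →
      ℓ ((0 : ℕ) : OnePoint ℕ) + ℓ ((n + 1 : ℕ) : OnePoint ℕ)
          + ℓ ((n - 1 : ℕ) : OnePoint ℕ)
        = (5 / 2 : ℝ) * ℓ ((n : ℕ) : OnePoint ℕ)) ∧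
    ℓ ((0 : ℕ) : OnePoint ℕ) + ℓ (∞ : OnePoint ℕ) + ℓ (∞ : OnePoint ℕ)
      = (5 / 2 : ℝ) * ℓ (∞ : OnePoint ℕ) := by
  have hpow : ∀ n : ℕ, (0 : ℝ) < (1 / 2 : ℝ) ^ n := fun n => pow_pos (by norm_num) n
  refine ⟨?_, ?_, ?_, ?_, ?_⟩
  · rw [OnePoint.continuous_iff_from_nat]
    have : Filter.Tendsto (fun n : ℕ => (2 : ℝ) - (1 / 2 : ℝ) ^ n) Filter.atTop (nhds (2 - 0)) := by
      exact Filter.Tendsto.const_sub _ (tendsto_pow_atTop_nhds_zero_of_lt_one (by norm_num) (by norm_num))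
    simp only [hfin, hinf]
    simpa using this
  · intro a
    induction a using OnePoint.rec with
    | infty => simp [hinf]
    | coe n =>
      rw [hfin]
      have h1 : (1 / 2 : ℝ) ^ n ≤ 1 := pow_le_one₀ (by norm_num) (by norm_num)
      constructor <;> [linarith; linarith [hpow n]]
  · rw [hfin, hfin]; norm_num
  · intro n hn
    obtain ⟨m, rfl⟩ := Nat.exists_eq_add_of_le hn
    simp only [hfin]
    have : (1 + m) - 1 = m := by omega
    rw [this]
    ring_nf
  · rw [hfin, hinf]; norm_num
end

section
/- Let 𝒜 = ℕ ∪ {∞} be the one-point compactification of ℕ and let ρ be the substitution ρ(0) = [0][1], ρ(n) = [0][n+1][n−1] for 0 < n < ∞, ρ(∞) = [0][∞][∞]. Then ρ is a continuous map from 𝒜 to the space of finite words over 𝒜 (with 𝒜^n carrying the product topology and the set of words the disjoint-union topology), and ρ is primitive: for every nonempty open U ⊆ 𝒜 there exists p ≥ 1 such that for every a ∈ 𝒜 some letter of ρ^p(a) lies in U. -/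
open OnePoint

/-- A substitution is primitive if for every nonempty open `U ⊆ A` there is a
`p ≥ 1` such that for every letter `a`, some letter of `ρ^p(a)` lies in `U`. -/
def Primitive {A : Type*} [TopologicalSpace A] (ρ : A → List A) : Prop :=
  ∀ U : Set A, IsOpen U → U.Nonempty →
    ∃ p : ℕ, 1 ≤ p ∧ ∀ a : A, ∃ b ∈ substIter ρ p a, b ∈ U

/-- The substitution `ρ(0) = [0][1]`, `ρ(n) = [0][n+1][n−1]` for `0 < n < ∞`,
`ρ(∞) = [0][∞][∞]` on the one-point compactification of `ℕ`. -/
def rhoInf : OnePoint ℕ → List (OnePoint ℕ) :=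
  fun a =>
    Option.elim a [((0 : ℕ) : OnePoint ℕ), (∞ : OnePoint ℕ), (∞ : OnePoint ℕ)]
      (fun n =>
        if n = 0 then [((0 : ℕ) : OnePoint ℕ), ((1 : ℕ) : OnePoint ℕ)]
        else [((0 : ℕ) : OnePoint ℕ), ((n + 1 : ℕ) : OnePoint ℕ),
          ((n - 1 : ℕ) : OnePoint ℕ)])

/-- A finite word, viewed as a point of the disjoint union `⊔_n A^n` of the
spaces `A^n` (each with the product topology, the union with the disjoint
union topology). -/
def wordOf {A : Type*} (l : List A) : Σ n : ℕ, Fin n → A :=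
  ⟨l.length, fun i => l.get i⟩

lemma rhoInf_coe (n : ℕ) : rhoInf (n : OnePoint ℕ) =
    if n = 0 then [((0 : ℕ) : OnePoint ℕ), ((1 : ℕ) : OnePoint ℕ)]
    else [((0 : ℕ) : OnePoint ℕ), ((n + 1 : ℕ) : OnePoint ℕ), ((n - 1 : ℕ) : OnePoint ℕ)] := rfl

lemma rhoInf_infty : rhoInf ∞ = [((0 : ℕ) : OnePoint ℕ), (∞ : OnePoint ℕ), (∞ : OnePoint ℕ)] := rfl

lemma wordOf_three {A : Type*} (a b c : A) : wordOf [a, b, c] = ⟨3, ![a, b, c]⟩ := by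
  refine Sigma.ext rfl ?_
  simp only [heq_eq_eq]
  apply heq_of_eq
  funext i
  fin_cases i <;> rfl

lemma zero_mem_rhoInf (a : OnePoint ℕ) : ((0 : ℕ) : OnePoint ℕ) ∈ rhoInf a := by
  induction a using OnePoint.rec with
  | infty => simp [rhoInf_infty]
  | coe n => by_cases h : n = 0 <;> simp [rhoInf_coe, h]

lemma succ_mem_rhoInf (k : ℕ) : ((k + 1 : ℕ) : OnePoint ℕ) ∈ rhoInf ((k : ℕ) : OnePoint ℕ) := by
  by_cases h : k = 0 <;> simp [rhoInf_coe, h]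

lemma mem_substIter_rhoInf : ∀ p : ℕ, ∀ k : ℕ, k < p → ∀ a : OnePoint ℕ,
    ((k : ℕ) : OnePoint ℕ) ∈ substIter rhoInf p a := by
  intro p
  induction p with
  | zero => intro k hk; omega
  | succ p ih =>
    intro k hk a
    have hstep : substIter rhoInf (p + 1) a = substWord rhoInf (substIter rhoInf p a) := by
      simp [substIter, Function.iterate_succ_apply']
    rcases Nat.eq_zero_or_pos p with hp | hp
    · subst hp
      interval_cases k
      rw [hstep]
      have h0 : substIter rhoInf 0 a = [a] := rfl
      rw [h0]
      simpa [substWord] using zero_mem_rhoInf a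
    · rw [hstep, substWord, List.mem_flatMap]
      rcases Nat.eq_zero_or_pos k with hk0 | hk1
      · subst hk0
        exact ⟨((0 : ℕ) : OnePoint ℕ), ih 0 hp a, zero_mem_rhoInf _⟩
      · obtain ⟨j, rfl⟩ : ∃ j, k = j + 1 := ⟨k - 1, by omega⟩
        exact ⟨((j : ℕ) : OnePoint ℕ), ih j (by omega) a, succ_mem_rhoInf j⟩

/-- The substitution `ρ(0) = [0][1]`,
`ρ(n) = [0][n+1][n−1]`, `ρ(∞) = [0][∞][∞]` on `ℕ ∪ {∞}` is a continuous map
into the space of finite words, and is primitive. -/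
theorem rhoInf_continuous_and_primitive :
    Continuous (fun a : OnePoint ℕ => wordOf (rhoInf a)) ∧ Primitive rhoInf := by
  constructor
  · rw [OnePoint.continuous_iff_from_discrete]
    have hco : Filter.Tendsto (fun n : ℕ => (n : OnePoint ℕ)) Filter.cofinite (nhds ∞) := by
      have := OnePoint.tendsto_coe_infty (X := ℕ)
      rwa [Filter.coclosedCompact_eq_cocompact, Filter.cocompact_eq_cofinite] at this
    have key : Filter.Tendsto
        (fun n : ℕ => (![((0:ℕ) : OnePoint ℕ), ((n+1 : ℕ) : OnePoint ℕ),
          ((n-1 : ℕ) : OnePoint ℕ)] : Fin 3 → OnePoint ℕ))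
        Filter.cofinite (nhds ![((0:ℕ) : OnePoint ℕ), ∞, ∞]) := by
      rw [tendsto_pi_nhds]
      intro i
      fin_cases i
      · exact tendsto_const_nhds
      · exact hco.comp (by
          rw [Nat.cofinite_eq_atTop]
          exact Filter.tendsto_add_atTop_nat 1)
      · exact hco.comp (by
          rw [Nat.cofinite_eq_atTop]
          exact Filter.tendsto_sub_atTop_nat 1)
    have key2 : Filter.Tendsto
        (fun n : ℕ => (⟨3, ![((0:ℕ) : OnePoint ℕ), ((n+1 : ℕ) : OnePoint ℕ),
          ((n-1 : ℕ) : OnePoint ℕ)]⟩ : Σ n : ℕ, Fin n → OnePoint ℕ))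
        Filter.cofinite (nhds ⟨3, ![((0:ℕ) : OnePoint ℕ), ∞, ∞]⟩) :=
      (continuous_sigmaMk.tendsto _).comp key
    have hinfty : wordOf (rhoInf ∞) = ⟨3, ![((0:ℕ) : OnePoint ℕ), ∞, ∞]⟩ := by
      rw [rhoInf_infty, wordOf_three]
    rw [hinfty]
    refine Filter.Tendsto.congr' ?_ key2
    refine Filter.eventually_cofinite.2 ?_
    apply Set.Finite.subset (Set.finite_singleton 0)
    intro n hn
    simp only [Set.mem_setOf_eq] at hn
    simp only [Set.mem_singleton_iff]
    by_contra h0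
    exact hn (by rw [rhoInf_coe, if_neg h0, wordOf_three])
  · intro U hU hne
    have hex : ∃ k : ℕ, ((k : ℕ) : OnePoint ℕ) ∈ U := by
      by_contra h
      push_neg at h
      obtain ⟨x, hx⟩ := hne
      induction x using OnePoint.rec with
      | infty =>
        rw [OnePoint.isOpen_def] at hU
        have hcpt := hU.1 hx
        have hfin : ((fun n : ℕ => (n : OnePoint ℕ)) ⁻¹' U)ᶜ.Finite :=
          hcpt.finite (isDiscrete_iff_discreteTopology.mpr inferInstance)
        have : ((fun n : ℕ => (n : OnePoint ℕ)) ⁻¹' U) = ∅ := by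
          ext n; simp [h n]
        rw [this, Set.compl_empty] at hfin
        exact Set.infinite_univ hfin
      | coe n => exact h n hx
    obtain ⟨k, hk⟩ := hex
    exact ⟨k + 1, by omega, fun a =>
      ⟨((k : ℕ) : OnePoint ℕ), mem_substIter_rhoInf (k+1) k (by omega) a, hk⟩⟩
end
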